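/- arXiv:0912.1783 — 5 statements merged into one kernel-verified Lean document; each statement's English description precedes it below -/
import Mathlib

section
/- Let H be a candidate sequence on a compact metrizable space E. Then for any two ordinals α and β and every x ∈ E, one has u_{α+β}^H(x) ≤ u_α^H(x) + u_β^H(x). -/
open Filter Topology Set
open scoped ENNReal

/-- A candidate sequence on a topological space `M`: a nondecreasing sequence of
nonnegative functions, starting at `0`, with bounded pointwise limit. -/
structure CandidateSeq (M : Type*) [TopologicalSpace M] where
  h : ℕ → M → ℝ
  nonneg : ∀ k x, 0 ≤ h k x
  mono : ∀ x, Monotone fun k => h k x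
  zero : ∀ x, h 0 x = 0
  limFn : M → ℝ
  tendsto_limFn : ∀ x, Tendsto (fun k => h k x) atTop (𝓝 (limFn x))
  bddAbove : ∃ B : ℝ, ∀ x, limFn x ≤ B

namespace CandidateSeq

variable {M : Type*} [TopologicalSpace M]

/-- The upper semicontinuous envelope of a `[0,∞]`-valued function:
`f~(x) = limsup_{y → x} f(y)`, the limsup including the value at `x` itself. -/
noncomputable def uscEnv (f : M → ℝ≥0∞) : M → ℝ≥0∞ := fun x => Filter.limsup f (𝓝 x)

/-- The tail functions `τ_k = h - h_k` (nonnegative, viewed in `[0,∞]`). -/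
noncomputable def tau (H : CandidateSeq M) (k : ℕ) : M → ℝ≥0∞ :=
  fun x => ENNReal.ofReal (H.limFn x - H.h k x)

/-- The transfinite sequence `u_α^H` associated to a candidate sequence, defined by
transfinite recursion: `u_0 ≡ 0`; `u_{α+1} = lim_k (u_α + τ_k)~` (the envelopes are
nonincreasing in `k`, so the limit is the infimum); at limit ordinals,
`u_α = (sup_{β<α} u_β)~`. Values are taken in `[0,∞]`. -/
noncomputable def u (H : CandidateSeq M) (α : Ordinal) : M → ℝ≥0∞ :=
  Ordinal.limitRecOn α
    (fun _ => 0)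
    (fun _ v => fun x => ⨅ k : ℕ, uscEnv (fun y => v y + H.tau k y) x)
    (fun o _ ih => uscEnv (fun y => ⨆ p : {β : Ordinal // β < o}, ih p.1 p.2 y))

/-- The order of accumulation of a candidate sequence: the least ordinal `α`
with `u_α = u_{α+1}`. -/
noncomputable def orderOfAccum (H : CandidateSeq M) : Ordinal :=
  sInf {α : Ordinal | H.u α = H.u (α + 1)}

/-- The restriction `H|_S` of a candidate sequence to a subset, as a candidate
sequence on the subspace `S`. -/
def restrict (H : CandidateSeq M) (S : Set M) : CandidateSeq S where
  h k x := H.h k x.1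
  nonneg k x := H.nonneg k x.1
  mono x := H.mono x.1
  zero x := H.zero x.1
  limFn x := H.limFn x.1
  tendsto_limFn x := H.tendsto_limFn x.1
  bddAbove := H.bddAbove.imp fun B hB x => hB x.1

/-- The pullback `F ∘ π` of a candidate sequence along a map. -/
def comp {K : Type*} [TopologicalSpace K] (F : CandidateSeq K) (π : M → K) :
    CandidateSeq M where
  h k x := F.h k (π x)
  nonneg k x := F.nonneg k (π x)
  mono x := F.mono (π x)
  zero x := F.zero (π x)
  limFn x := F.limFn (π x)
  tendsto_limFn x := F.tendsto_limFn (π x)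
  bddAbove := F.bddAbove.imp fun B hB x => hB (π x)

/-- `H` uniformly dominates `F`. -/
def UnifDominates (H F : CandidateSeq M) : Prop :=
  ∀ ε : ℝ, 0 < ε → ∀ k, ∃ l, ∀ x, F.h k x ≤ H.h l x + ε

/-- Uniform equivalence of candidate sequences. -/
def UnifEquiv (H F : CandidateSeq M) : Prop :=
  UnifDominates H F ∧ UnifDominates F H

end CandidateSeq


section Auxiliary

namespace CandidateSeq

variable {M : Type*} [TopologicalSpace M]

lemma le_uscEnv' (f : M → ℝ≥0∞) (x : M) : f x ≤ uscEnv f x := by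
  have h1 : ∃ᶠ y in 𝓝 x, f x ≤ f y :=
    Filter.frequently_iff.mpr fun hU => ⟨x, mem_of_mem_nhds hU, le_rfl⟩
  exact Filter.le_limsup_of_frequently_le' h1

lemma uscEnv_mono {f g : M → ℝ≥0∞} (h : ∀ y, f y ≤ g y) (x : M) :
    uscEnv f x ≤ uscEnv g x :=
  Filter.limsup_le_limsup (Filter.Eventually.of_forall h)

lemma limsup_add_le'' {β : Type*} (F : Filter β) (u v : β → ℝ≥0∞) :
    Filter.limsup (fun y => u y + v y) F ≤ Filter.limsup u F + Filter.limsup v F := by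
  refine ENNReal.le_of_forall_pos_le_add fun ε hε hlt => ?_
  have hA : Filter.limsup u F ≠ ⊤ := (le_self_add.trans_lt hlt).ne
  have hB : Filter.limsup v F ≠ ⊤ := (le_add_self.trans_lt hlt).ne
  have hε2 : ((ε : ℝ≥0∞) / 2) ≠ 0 := by
    simp [ENNReal.div_eq_zero_iff, hε.ne']
  have key : ∀ (w : β → ℝ≥0∞), Filter.limsup w F ≠ ⊤ →
      ∀ᶠ y in F, w y ≤ Filter.limsup w F + ε / 2 := by
    intro w hw
    obtain ⟨a, ha, ha'⟩ :
        ∃ a ∈ {a | ∀ᶠ n in F, w n ≤ a}, a < Filter.limsup w F + ε / 2 := by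
      apply sInf_lt_iff.mp
      rw [← Filter.limsup_eq]
      exact ENNReal.lt_add_right hw hε2
    exact ha.mono fun y hy => hy.trans ha'.le
  have h2 : ∀ᶠ y in F, u y + v y ≤
      (Filter.limsup u F + ε / 2) + (Filter.limsup v F + ε / 2) :=
    ((key u hA).and (key v hB)).mono fun y hy => add_le_add hy.1 hy.2
  calc Filter.limsup (fun y => u y + v y) F
      ≤ (Filter.limsup u F + ε / 2) + (Filter.limsup v F + ε / 2) :=
        Filter.limsup_le_of_le (by isBoundedDefault) h2
    _ = Filter.limsup u F + Filter.limsup v F + ε := by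
        rw [add_add_add_comm, ENNReal.add_halves]

lemma uscEnv_add_le (f g : M → ℝ≥0∞) (x : M) :
    uscEnv (fun y => f y + g y) x ≤ uscEnv f x + uscEnv g x :=
  limsup_add_le'' _ f g

lemma upperSemicontinuous_uscEnv (f : M → ℝ≥0∞) : UpperSemicontinuous (uscEnv f) := by
  intro x a ha
  rw [uscEnv, Filter.limsup_eq] at ha
  obtain ⟨c, hc, hca⟩ := sInf_lt_iff.mp ha
  obtain ⟨U, hU, hUopen, hxU⟩ := eventually_nhds_iff.mp hc
  filter_upwards [hUopen.mem_nhds hxU] with z hz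
  have : uscEnv f z ≤ c :=
    Filter.limsup_le_of_le (by isBoundedDefault)
      (eventually_nhds_iff.mpr ⟨U, hU, hUopen, hz⟩)
  exact this.trans_lt hca

lemma uscEnv_eq_of_usc {f : M → ℝ≥0∞} (hf : UpperSemicontinuous f) (x : M) :
    uscEnv f x = f x := by
  refine le_antisymm ?_ (le_uscEnv' f x)
  by_contra h
  push_neg at h
  obtain ⟨a, ha1, ha2⟩ := exists_between h
  have : uscEnv f x ≤ a :=
    Filter.limsup_le_of_le (by isBoundedDefault) ((hf x a ha1).mono fun y hy => hy.le)
  exact absurd ha2 this.not_gt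

variable (H : CandidateSeq M)

lemma u_zero : H.u 0 = fun _ => 0 := by
  rw [u, Ordinal.limitRecOn_zero]

lemma u_succ (α : Ordinal) :
    H.u (α + 1) = fun x => ⨅ k : ℕ, uscEnv (fun y => H.u α y + H.tau k y) x := by
  rw [u, Ordinal.limitRecOn_add_one]
  rfl

lemma u_limit {α : Ordinal} (hα : Order.IsSuccLimit α) :
    H.u α = uscEnv (fun y => ⨆ p : {β : Ordinal // β < α}, H.u p.1 y) := by
  rw [u, Ordinal.limitRecOn_limit _ _ _ _ hα]
  rfl

lemma upperSemicontinuous_u (α : Ordinal) : UpperSemicontinuous (H.u α) := by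
  induction α using Ordinal.limitRecOn with
  | zero =>
    rw [u_zero]
    exact upperSemicontinuous_const
  | add_one β ih =>
    rw [u_succ]
    intro x a ha
    obtain ⟨k, hk⟩ := iInf_lt_iff.mp ha
    filter_upwards [upperSemicontinuous_uscEnv (fun y => H.u β y + H.tau k y) x a hk]
      with z hz
    exact (iInf_le _ k).trans_lt hz
  | limit β hβ ih =>
    rw [u_limit H hβ]
    exact upperSemicontinuous_uscEnv _

lemma u_le_u_succ (α : Ordinal) (x : M) : H.u α x ≤ H.u (α + 1) x := by
  rw [u_succ]
  refine le_iInf fun k => ?_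
  calc H.u α x ≤ H.u α x + H.tau k x := le_self_add
    _ ≤ uscEnv (fun y => H.u α y + H.tau k y) x := le_uscEnv' _ x

lemma u_mono {α β : Ordinal} (h : α ≤ β) (x : M) : H.u α x ≤ H.u β x := by
  induction β using Ordinal.limitRecOn with
  | zero =>
    obtain rfl : α = 0 := nonpos_iff_eq_zero.mp h
    exact le_rfl
  | add_one γ ih =>
    rcases eq_or_lt_of_le h with rfl | h'
    · exact le_rfl
    · have h2 : α ≤ γ := Order.lt_add_one_iff.mp h'
      exact (ih h2).trans (u_le_u_succ H γ x)
  | limit γ hγ ih =>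
    rcases eq_or_lt_of_le h with rfl | h'
    · exact le_rfl
    · rw [u_limit H hγ]
      calc H.u α x ≤ ⨆ p : {β : Ordinal // β < γ}, H.u p.1 x :=
            le_iSup (fun p : {β : Ordinal // β < γ} => H.u p.1 x) ⟨α, h'⟩
        _ ≤ _ := le_uscEnv' _ x

theorem u_add_le (α β : Ordinal) (x : M) :
    H.u (α + β) x ≤ H.u α x + H.u β x := by
  induction β using Ordinal.limitRecOn generalizing x with
  | zero => simpa [u_zero] using le_rfl
  | add_one δ ih =>
    have hus : ∀ y, H.u (α + δ) y ≤ H.u α y + H.u δ y := ih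
    rw [← add_assoc, u_succ, u_succ]
    simp only
    rw [ENNReal.add_iInf]
    refine iInf_mono fun k => ?_
    calc uscEnv (fun y => H.u (α + δ) y + H.tau k y) x
        ≤ uscEnv (fun y => H.u α y + (H.u δ y + H.tau k y)) x := by
          refine uscEnv_mono (fun y => ?_) x
          rw [← add_assoc]
          exact add_le_add_left (hus y) _
      _ ≤ uscEnv (H.u α) x + uscEnv (fun y => H.u δ y + H.tau k y) x :=
          uscEnv_add_le _ _ x
      _ = H.u α x + uscEnv (fun y => H.u δ y + H.tau k y) x := by
          rw [uscEnv_eq_of_usc (upperSemicontinuous_u H α)]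
  | limit δ hδ ih =>
    have hαδ : Order.IsSuccLimit (α + δ) := Ordinal.isSuccLimit_add α hδ
    rw [u_limit H hαδ]
    calc uscEnv (fun y => ⨆ p : {β : Ordinal // β < α + δ}, H.u p.1 y) x
        ≤ uscEnv (fun y => H.u α y + H.u δ y) x := by
          refine uscEnv_mono (fun y => iSup_le fun p => ?_) x
          rcases le_or_gt p.1 α with hp | hp
          · exact (u_mono H hp y).trans le_self_add
          · have hle : α ≤ p.1 := hp.le
            have hk : α + (p.1 - α) = p.1 := Ordinal.add_sub_cancel_of_le hle
            have hlt : p.1 - α < δ := by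
              have := p.2
              rwa [← hk, add_lt_add_iff_left] at this
            calc H.u p.1 y = H.u (α + (p.1 - α)) y := by rw [hk]
              _ ≤ H.u α y + H.u (p.1 - α) y := ih _ hlt y
              _ ≤ H.u α y + H.u δ y := add_le_add_right (u_mono H hlt.le y) _
      _ ≤ uscEnv (H.u α) x + uscEnv (H.u δ) x := uscEnv_add_le _ _ x
      _ = H.u α x + H.u δ x := by
          rw [uscEnv_eq_of_usc (upperSemicontinuous_u H α),
            uscEnv_eq_of_usc (upperSemicontinuous_u H δ)]

end CandidateSeq

end Auxiliary

/-- **Subadditivity of the transfinite sequence** (Proposition `UsubAdd`): for a candidate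
sequence `H` on a compact metrizable space `E` and any two ordinals `α, β`,
`u_{α+β}^H ≤ u_α^H + u_β^H` pointwise. -/
theorem uSeq_add_le {E : Type*} [TopologicalSpace E] [CompactSpace E]
    [TopologicalSpace.MetrizableSpace E] (H : CandidateSeq E) (α β : Ordinal) (x : E) :
    H.u (α + β) x ≤ H.u α x + H.u β x :=
  H.u_add_le α β x
end

section
/- Let M and K be compact metrizable spaces, let π : M → K be a continuous, surjective, open map (in particular, any homeomorphism), let F be a candidate sequence on K, and let H = F ∘ π. Then for every ordinal γ and every x ∈ M, u_γ^H(x) = u_γ^F(π(x)). -/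
open Filter Topology Set
open scoped ENNReal

/-- **The transfinite sequence of a pullback along an open map**: if `π : M → K` is a
continuous, surjective, open map (e.g. a homeomorphism), `F` a candidate sequence on `K`,
and `H = F ∘ π`, then `u_γ^H(x) = u_γ^F(π x)` for every ordinal `γ` and every `x ∈ M`. -/
theorem uSeq_comp_eq_of_isOpenMap {M K : Type*} [TopologicalSpace M] [CompactSpace M]
    [TopologicalSpace.MetrizableSpace M] [TopologicalSpace K] [CompactSpace K]
    [TopologicalSpace.MetrizableSpace K] (π : M → K) (hπc : Continuous π)
    (hπs : Function.Surjective π) (hπo : IsOpenMap π) (F : CandidateSeq K) (γ : Ordinal)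
    (x : M) :
    (F.comp π).u γ x = F.u γ (π x) := by
  have hmap : ∀ y : M, Filter.map π (𝓝 y) = 𝓝 (π y) :=
    fun y => le_antisymm hπc.continuousAt (hπo.nhds_le y)
  have henv : ∀ (g : K → ℝ≥0∞) (y : M),
      CandidateSeq.uscEnv (fun z => g (π z)) y = CandidateSeq.uscEnv g (π y) := by
    intro g y
    unfold CandidateSeq.uscEnv
    rw [← hmap y]
    simp [Filter.limsup, Filter.map_map, Function.comp_def]
  induction γ using Ordinal.limitRecOn generalizing x with
  | zero => simp [CandidateSeq.u, Ordinal.limitRecOn_zero]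
  | add_one α ih =>
    show (F.comp π).u (Order.succ α) x = F.u (Order.succ α) (π x)
    simp only [CandidateSeq.u, Ordinal.limitRecOn_succ]
    refine iInf_congr fun k => ?_
    have h1 : (fun y => (F.comp π).u α y + (F.comp π).tau k y)
        = fun y => F.u α (π y) + F.tau k (π y) := funext fun y => by
      rw [show (F.comp π).u α y
        = Ordinal.limitRecOn α (fun _ => (0:ℝ≥0∞))
            (fun _ v => fun x => ⨅ k : ℕ, CandidateSeq.uscEnv
              (fun y => v y + (F.comp π).tau k y) x)
            (fun o _ ih => CandidateSeq.uscEnv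
              (fun y => ⨆ p : {β : Ordinal // β < o}, ih p.1 p.2 y)) y from rfl,
        ← CandidateSeq.u, ih y]
      rfl
    simp only [CandidateSeq.u] at h1 ⊢
    rw [h1]
    exact henv (fun z => F.u α z + F.tau k z) x
  | limit o ho ih =>
    simp only [CandidateSeq.u, Ordinal.limitRecOn_limit _ _ _ _ ho]
    have h1 : (fun y => ⨆ p : {β : Ordinal // β < o}, (F.comp π).u p.1 y)
        = fun y => ⨆ p : {β : Ordinal // β < o}, F.u p.1 (π y) :=
      funext fun y => iSup_congr fun p => ih p.1 p.2 y
    simp only [CandidateSeq.u] at h1 ⊢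
    rw [h1]
    exact henv (fun z => ⨆ p : {β : Ordinal // β < o}, F.u p.1 z) x
end

section
/- Let H be a harmonic candidate sequence on a metrizable Choquet simplex K. Then for every ordinal γ, the function u_γ^H is concave; moreover, whenever u_γ^H is real-valued (and hence upper semicontinuous), it is supharmonic. -/
open Filter Topology Set
open scoped ENNReal

open MeasureTheory

section Simplex

variable {V : Type*} [AddCommGroup V] [Module ℝ V] [TopologicalSpace V] [MeasurableSpace V]

/-- A function on (the subtype of) a convex set `K` is affine if it respects
convex combinations of points of `K`. -/
def AffineOnSet (K : Set V) (f : K → ℝ) : Prop :=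
  ∀ (x y z : K) (t : ℝ), 0 ≤ t → t ≤ 1 →
    (z : V) = t • (x : V) + (1 - t) • (y : V) → f z = t * f x + (1 - t) * f y

/-- A Borel probability measure `Q` on `K` has barycenter `b ∈ K` if
`f(b) = ∫ f dQ` for every continuous affine `f : K → ℝ`. -/
def IsBarycenterOf (K : Set V) (Q : Measure K) (b : K) : Prop :=
  ∀ f : K → ℝ, Continuous f → AffineOnSet K f → f b = ∫ x, f x ∂Q

/-- A function `f : K → ℝ` is harmonic if `f(b) = ∫ f dQ` for every Borel probability
measure `Q` on `K` with barycenter `b`. -/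
def HarmonicOnSet (K : Set V) (f : K → ℝ) : Prop :=
  ∀ (b : K) (Q : Measure K), IsProbabilityMeasure Q → IsBarycenterOf K Q b →
    f b = ∫ x, f x ∂Q

/-- A function `f : K → ℝ` is supharmonic if `f(b) ≥ ∫ f dQ` for every Borel probability
measure `Q` on `K` with barycenter `b`. -/
def SupharmonicOnSet (K : Set V) (f : K → ℝ) : Prop :=
  ∀ (b : K) (Q : Measure K), IsProbabilityMeasure Q → IsBarycenterOf K Q b →
    ∫ x, f x ∂Q ≤ f b

/-- The set of extreme points of `K`, viewed inside the subtype `K`. -/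
def extremeSubset (K : Set V) : Set K := {x : K | (x : V) ∈ K.extremePoints ℝ}

/-- `P` witnesses that the compact convex metrizable set `K` is a (metrizable) Choquet
simplex, via Choquet's characterization: `P x` is the unique Borel probability measure on
`K` vanishing off the extreme points of `K` whose barycenter is `x`. -/
structure IsChoquetKernel (K : Set V) (P : K → Measure K) : Prop where
  prob : ∀ x, IsProbabilityMeasure (P x)
  ext_null : ∀ x, P x (extremeSubset K)ᶜ = 0
  bary : ∀ x, IsBarycenterOf K (P x) x
  unique : ∀ (x : K) (Q : Measure K), IsProbabilityMeasure Q →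
    Q (extremeSubset K)ᶜ = 0 → IsBarycenterOf K Q x → Q = P x

end Simplex


namespace ChoquetAux

open CandidateSeq MeasureTheory

/-! ### Generalities on the u.s.c. envelope -/

section Top
variable {M : Type*} [TopologicalSpace M]

lemma le_uscEnv (f : M → ℝ≥0∞) (x : M) : f x ≤ uscEnv f x := by
  rw [uscEnv, limsup_eq]
  exact le_sInf fun a ha => ha.self_of_nhds

lemma usc_uscEnv (f : M → ℝ≥0∞) : UpperSemicontinuous (uscEnv f) := by
  intro x y hy
  obtain ⟨z, hz1, hz2⟩ := exists_between hy
  have hev : ∀ᶠ w in 𝓝 x, f w < z := eventually_lt_of_limsup_lt hz1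
  obtain ⟨s, hs_sub, hs_open, hxs⟩ := eventually_nhds_iff.mp hev
  refine eventually_nhds_iff.mpr ⟨s, fun w hw => ?_, hs_open, hxs⟩
  calc uscEnv f w ≤ z :=
        limsup_le_of_le (by isBoundedDefault)
          (eventually_of_mem (hs_open.mem_nhds hw) fun v hv => (hs_sub v hv).le)
    _ < y := hz2

lemma usc_iInf {ι : Sort*} {f : ι → M → ℝ≥0∞} (hf : ∀ i, UpperSemicontinuous (f i)) :
    UpperSemicontinuous (fun x => ⨅ i, f i x) := by
  intro x y hy
  obtain ⟨i, hi⟩ := iInf_lt_iff.mp hy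
  exact (hf i x y hi).mono fun w hw => lt_of_le_of_lt (iInf_le _ i) hw

/-! ### Basic facts about the transfinite sequence -/

lemma u_zero (H : CandidateSeq M) : H.u 0 = fun _ => 0 :=
  Ordinal.limitRecOn_zero _ _ _

lemma u_succ (H : CandidateSeq M) (α : Ordinal) :
    H.u (Order.succ α) = fun x => ⨅ k : ℕ, uscEnv (fun y => H.u α y + H.tau k y) x :=
  Ordinal.limitRecOn_succ _ _ _ _

lemma u_limit (H : CandidateSeq M) (o : Ordinal) (ho : Order.IsSuccLimit o) :
    H.u o = uscEnv (fun y => ⨆ p : {β : Ordinal // β < o}, H.u p.1 y) :=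
  Ordinal.limitRecOn_limit _ _ _ _ ho

lemma u_mono (H : CandidateSeq M) :
    ∀ (α β : Ordinal), β ≤ α → ∀ x, H.u β x ≤ H.u α x := by
  intro α
  induction α using Ordinal.limitRecOn with
  | zero =>
    intro β hβ x
    rw [nonpos_iff_eq_zero.mp hβ]
  | add_one α IH =>
    rw [Ordinal.add_one_eq_succ]
    intro β hβ x
    have hstep : H.u α x ≤ H.u (Order.succ α) x := by
      rw [u_succ]
      refine le_iInf fun k => ?_
      exact le_trans le_self_add (le_uscEnv (fun y => H.u α y + H.tau k y) x)
    rcases Order.le_succ_iff_eq_or_le.mp hβ with rfl | hle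
    · exact le_rfl
    · exact le_trans (IH β hle x) hstep
  | limit o ho IH =>
    intro β hβ x
    rcases eq_or_lt_of_le hβ with rfl | hlt
    · exact le_rfl
    · rw [u_limit H o ho]
      refine le_trans ?_ (le_uscEnv _ x)
      exact le_iSup (fun p : {β : Ordinal // β < o} => H.u p.1 x) ⟨β, hlt⟩

lemma u_usc (H : CandidateSeq M) (γ : Ordinal) : UpperSemicontinuous (H.u γ) := by
  induction γ using Ordinal.limitRecOn with
  | zero => rw [u_zero]; exact upperSemicontinuous_const
  | add_one α IH => rw [Ordinal.add_one_eq_succ, u_succ]; exact usc_iInf fun k => usc_uscEnv _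
  | limit o ho IH => rw [u_limit H o ho]; exact usc_uscEnv _

end Top

/-! ### Concavity -/

section Conc
variable {V : Type*} [AddCommGroup V] [Module ℝ V] [TopologicalSpace V]
  [IsTopologicalAddGroup V] [ContinuousSMul ℝ V] {K : Set V}

/-- Concavity (in `[0,∞]`) of a function on the convex set `K`. -/
def EConc (K : Set V) (w : K → ℝ≥0∞) : Prop :=
  ∀ (x y z : K) (t : ℝ), 0 ≤ t → t ≤ 1 → (z : V) = t • (x : V) + (1 - t) • (y : V) →
    ENNReal.ofReal t * w x + ENNReal.ofReal (1 - t) * w y ≤ w z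

lemma EConc.uscEnv' (hconv : Convex ℝ K) {w : K → ℝ≥0∞} (hw : EConc K w) :
    EConc K (uscEnv w) := by
  intro x y z t ht0 ht1 hz
  rcases eq_or_lt_of_le ht0 with rfl | ht0'
  · have hzy : z = y := Subtype.ext (by rw [hz]; simp)
    simp [hzy]
  rcases eq_or_lt_of_le ht1 with rfl | ht1'
  · have hzx : z = x := Subtype.ext (by rw [hz]; simp)
    simp [hzx]
  have hmem : ∀ p : K × K, t • (p.1 : V) + (1 - t) • (p.2 : V) ∈ K := fun p =>
    hconv p.1.2 p.2.2 ht0 (by linarith) (by ring)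
  set m : K × K → K := fun p => ⟨_, hmem p⟩ with hm
  have hcont : Continuous m := by
    apply Continuous.subtype_mk
    exact ((continuous_subtype_val.comp continuous_fst).const_smul t).add
      ((continuous_subtype_val.comp continuous_snd).const_smul (1 - t))
  have htend : Tendsto m (𝓝 x ×ˢ 𝓝 y) (𝓝 z) := by
    have hmx : m (x, y) = z := Subtype.ext hz.symm
    rw [← hmx, ← nhds_prod_eq]
    exact hcont.tendsto (x, y)
  have h1 : limsup (fun p : K × K => ENNReal.ofReal t * w p.1 + ENNReal.ofReal (1 - t) * w p.2)
      (𝓝 x ×ˢ 𝓝 y) ≤ CandidateSeq.uscEnv w z := by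
    refine le_trans (limsup_le_limsup
      (Eventually.of_forall fun p => hw p.1 p.2 (m p) t ht0 ht1 rfl)) ?_
    rw [show (fun p : K × K => w (m p)) = w ∘ m from rfl, limsup_comp w m]
    exact limsup_le_limsup_of_le htend
  refine le_trans ?_ h1
  rw [limsup_eq]
  refine le_sInf fun a ha => ?_
  rw [mem_setOf_eq, eventually_prod_iff] at ha
  obtain ⟨pa, hpa, pb, hpb, hab⟩ := ha
  haveI hnea : Nonempty {p : K // pa p} := ⟨⟨x, hpa.self_of_nhds⟩⟩
  haveI hneb : Nonempty {p : K // pb p} := ⟨⟨y, hpb.self_of_nhds⟩⟩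
  have hAx : CandidateSeq.uscEnv w x ≤ ⨆ p : {p : K // pa p}, w p.1 :=
    limsup_le_of_le (by isBoundedDefault)
      (hpa.mono fun p hp => le_iSup (fun q : {p : K // pa p} => w q.1) ⟨p, hp⟩)
  have hBy : CandidateSeq.uscEnv w y ≤ ⨆ p : {p : K // pb p}, w p.1 :=
    limsup_le_of_le (by isBoundedDefault)
      (hpb.mono fun p hp => le_iSup (fun q : {p : K // pb p} => w q.1) ⟨p, hp⟩)
  calc ENNReal.ofReal t * CandidateSeq.uscEnv w x
        + ENNReal.ofReal (1 - t) * CandidateSeq.uscEnv w y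
      ≤ ENNReal.ofReal t * (⨆ p : {p : K // pa p}, w p.1) +
        ENNReal.ofReal (1 - t) * (⨆ p : {p : K // pb p}, w p.1) :=
        add_le_add (mul_le_mul' le_rfl hAx) (mul_le_mul' le_rfl hBy)
    _ = (⨆ p : {p : K // pa p}, ENNReal.ofReal t * w p.1) +
        ⨆ p : {p : K // pb p}, ENNReal.ofReal (1 - t) * w p.1 := by
        rw [ENNReal.mul_iSup, ENNReal.mul_iSup]
    _ ≤ a := ENNReal.iSup_add_iSup_le fun p q => hab p.2 q.2

lemma EConc.iInf' {ι : Sort*} {f : ι → K → ℝ≥0∞} (hf : ∀ i, EConc K (f i)) :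
    EConc K (fun x => ⨅ i, f i x) := by
  intro x y z t ht0 ht1 hz
  refine le_iInf fun i => ?_
  exact le_trans (add_le_add (mul_le_mul' le_rfl (iInf_le _ i)) (mul_le_mul' le_rfl (iInf_le _ i)))
    (hf i x y z t ht0 ht1 hz)

lemma EConc.add' {f g : K → ℝ≥0∞} (hf : EConc K f) (hg : EConc K g) :
    EConc K (fun x => f x + g x) := by
  intro x y z t ht0 ht1 hz
  have h := add_le_add (hf x y z t ht0 ht1 hz) (hg x y z t ht0 ht1 hz)
  refine le_trans (le_of_eq ?_) h
  ring

lemma econc_ofReal_affine {g : K → ℝ} (hg0 : ∀ x, 0 ≤ g x) (haff : AffineOnSet K g) :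
    EConc K (fun x => ENNReal.ofReal (g x)) := by
  intro x y z t ht0 ht1 hz
  show ENNReal.ofReal t * ENNReal.ofReal (g x) + ENNReal.ofReal (1 - t) * ENNReal.ofReal (g y)
    ≤ ENNReal.ofReal (g z)
  rw [haff x y z t ht0 ht1 hz,
    ENNReal.ofReal_add (mul_nonneg ht0 (hg0 x)) (mul_nonneg (by linarith) (hg0 y)),
    ENNReal.ofReal_mul ht0, ENNReal.ofReal_mul (by linarith : (0:ℝ) ≤ 1 - t)]

lemma econc_iSup_of_dir {ι : Sort*} [Nonempty ι] {f : ι → K → ℝ≥0∞}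
    (hdir : ∀ i j, (∀ x, f i x ≤ f j x) ∨ (∀ x, f j x ≤ f i x))
    (hf : ∀ i, EConc K (f i)) : EConc K (fun x => ⨆ i, f i x) := by
  intro x y z t ht0 ht1 hz
  rw [ENNReal.mul_iSup, ENNReal.mul_iSup]
  refine ENNReal.iSup_add_iSup_le fun i j => ?_
  rcases hdir i j with h | h
  · refine le_trans (add_le_add (mul_le_mul' le_rfl (h x)) le_rfl) ?_
    exact le_trans (hf j x y z t ht0 ht1 hz) (le_iSup (fun i => f i z) j)
  · refine le_trans (add_le_add le_rfl (mul_le_mul' le_rfl (h y))) ?_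
    exact le_trans (hf i x y z t ht0 ht1 hz) (le_iSup (fun i => f i z) i)

end Conc

/-! ### Harmonic functions are affine; the tails are affine -/

section Harm
variable {V : Type*} [AddCommGroup V] [Module ℝ V] [TopologicalSpace V]
  [IsTopologicalAddGroup V] [ContinuousSMul ℝ V] [MeasurableSpace V] [BorelSpace V]
  {K : Set V}

lemma affine_of_harmonic (hKmetr : TopologicalSpace.MetrizableSpace K)
    {f : K → ℝ} (hf : HarmonicOnSet K f) : AffineOnSet K f := by
  classical
  haveI := hKmetr
  intro x y z t ht0 ht1 hz
  rcases eq_or_lt_of_le ht0 with rfl | ht0'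
  · have hzy : z = y := Subtype.ext (by rw [hz]; simp)
    rw [hzy]; ring
  rcases eq_or_lt_of_le ht1 with rfl | ht1'
  · have hzx : z = x := Subtype.ext (by rw [hz]; simp)
    rw [hzx]; ring
  have ht1'' : (0:ℝ) ≤ 1 - t := by linarith
  set μ1 : Measure K := ENNReal.ofReal t • Measure.dirac x with hμ1
  set μ2 : Measure K := ENNReal.ofReal (1 - t) • Measure.dirac y with hμ2
  set Q : Measure K := μ1 + μ2 with hQdef
  have hone : ENNReal.ofReal t + ENNReal.ofReal (1 - t) = 1 := by
    rw [← ENNReal.ofReal_add ht0 ht1'']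
    norm_num
  have hprob : IsProbabilityMeasure Q := by
    constructor
    rw [hQdef, Measure.add_apply, hμ1, hμ2, Measure.smul_apply, Measure.smul_apply,
      Measure.dirac_apply_of_mem (mem_univ x), Measure.dirac_apply_of_mem (mem_univ y),
      smul_eq_mul, smul_eq_mul, mul_one, mul_one, hone]
  -- diracs integrate any function (using measurable singletons)
  have haeconst : ∀ (φ : K → ℝ) (p : K), φ =ᵐ[Measure.dirac p] fun _ => φ p := by
    intro φ p
    rw [Filter.EventuallyEq, ae_iff]
    have hsub : {w : K | ¬ φ w = φ p} ⊆ ({p} : Set K)ᶜ := by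
      intro w hw hwp
      rw [mem_singleton_iff] at hwp
      subst hwp
      exact hw rfl
    refine measure_mono_null hsub ?_
    rw [Measure.dirac_apply' _ (measurableSet_singleton p).compl]
    simp
  have hdint : ∀ (φ : K → ℝ) (p : K), Integrable φ (Measure.dirac p) := by
    intro φ p
    exact (integrable_const (φ p)).congr (haeconst φ p).symm
  have hQint : ∀ (φ : K → ℝ), Integrable φ Q := by
    intro φ
    rw [hQdef]
    refine Integrable.add_measure ?_ ?_
    · exact (hdint φ x).smul_measure ENNReal.ofReal_ne_top
    · exact (hdint φ y).smul_measure ENNReal.ofReal_ne_top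
  have hQeval : ∀ (φ : K → ℝ), ∫ w, φ w ∂Q = t * φ x + (1 - t) * φ y := by
    intro φ
    rw [hQdef, integral_add_measure ((hdint φ x).smul_measure ENNReal.ofReal_ne_top)
      ((hdint φ y).smul_measure ENNReal.ofReal_ne_top),
      integral_smul_measure, integral_smul_measure, integral_dirac, integral_dirac,
      ENNReal.toReal_ofReal ht0, ENNReal.toReal_ofReal ht1'', smul_eq_mul, smul_eq_mul]
  have hbary : IsBarycenterOf K Q z := by
    intro φ hφc hφa
    rw [hQeval φ, hφa x y z t ht0 ht1 hz]
  have := hf z Q hprob hbary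
  rw [hQeval f] at this
  exact this

lemma limFn_affine (H : CandidateSeq K) (haff : ∀ k, AffineOnSet K (H.h k)) :
    AffineOnSet K H.limFn := by
  intro x y z t ht0 ht1 hz
  have h1 : Tendsto (fun k => H.h k z) atTop (𝓝 (t * H.limFn x + (1 - t) * H.limFn y)) := by
    have : (fun k => H.h k z) = fun k => t * H.h k x + (1 - t) * H.h k y := by
      funext k
      exact haff k x y z t ht0 ht1 hz
    rw [this]
    exact ((H.tendsto_limFn x).const_mul t).add ((H.tendsto_limFn y).const_mul (1 - t))
  exact tendsto_nhds_unique (H.tendsto_limFn z) h1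

lemma tail_nonneg (H : CandidateSeq K) (k : ℕ) (x : K) : 0 ≤ H.limFn x - H.h k x := by
  have : H.h k x ≤ H.limFn x :=
    ge_of_tendsto (H.tendsto_limFn x) (eventually_atTop.mpr ⟨k, fun l hl => H.mono x hl⟩)
  linarith

lemma tail_affine (H : CandidateSeq K) (haff : ∀ k, AffineOnSet K (H.h k)) (k : ℕ) :
    AffineOnSet K (fun x => H.limFn x - H.h k x) := by
  intro x y z t ht0 ht1 hz
  show H.limFn z - H.h k z = t * (H.limFn x - H.h k x) + (1 - t) * (H.limFn y - H.h k y)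
  rw [limFn_affine H haff x y z t ht0 ht1 hz, haff k x y z t ht0 ht1 hz]
  ring

end Harm

/-! ### Supharmonicity of u.s.c. concave functions -/

section Suph
variable {V : Type*} [AddCommGroup V] [Module ℝ V] [TopologicalSpace V]
  [IsTopologicalAddGroup V] [ContinuousSMul ℝ V] [LocallyConvexSpace ℝ V]
  [MeasurableSpace V] [BorelSpace V] {K : Set V}

lemma supharmonic_of_usc_concave (hKc : IsCompact K) (hKconv : Convex ℝ K)
    (hKmetr : TopologicalSpace.MetrizableSpace K)
    {g : K → ℝ} (husc : UpperSemicontinuous g) (hg0 : ∀ x, 0 ≤ g x)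
    (hgconc : ∀ (x y z : K) (t : ℝ), 0 ≤ t → t ≤ 1 →
      (z : V) = t • (x : V) + (1 - t) • (y : V) → t * g x + (1 - t) * g y ≤ g z) :
    SupharmonicOnSet K g := by
  haveI := hKmetr
  haveI : CompactSpace K := isCompact_iff_compactSpace.mp hKc
  -- a uniform bound on g
  obtain ⟨M, hM⟩ : ∃ M : ℝ, ∀ x : K, g x ≤ M := by
    have hcover : (univ : Set K) ⊆ ⋃ n : ℕ, g ⁻¹' Iio (n : ℝ) := by
      intro x _
      obtain ⟨n, hn⟩ := exists_nat_gt (g x)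
      exact mem_iUnion.mpr ⟨n, hn⟩
    obtain ⟨s, hs⟩ := isCompact_univ.elim_finite_subcover (fun n : ℕ => g ⁻¹' Iio (n : ℝ))
      (fun n => husc.isOpen_preimage _) hcover
    refine ⟨((s.sup id : ℕ) : ℝ), fun x => ?_⟩
    obtain ⟨n, hns, hn⟩ := mem_iUnion₂.mp (hs (mem_univ x))
    exact le_trans (le_of_lt hn) (Nat.cast_le.mpr (Finset.le_sup (f := id) hns))
  -- hypograph
  set A : Set (V × ℝ) := {p | ∃ hv : p.1 ∈ K, 0 ≤ p.2 ∧ p.2 ≤ g ⟨p.1, hv⟩} with hA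
  have hAconv : Convex ℝ A := by
    rintro p ⟨hp1, hp2, hp3⟩ q ⟨hq1, hq2, hq3⟩ a b ha hb hab
    have hb' : b = 1 - a := by linarith
    subst hb'
    have ha1 : a ≤ 1 := by linarith
    have hmem : a • p.1 + (1 - a) • q.1 ∈ K := hKconv hp1 hq1 ha hb hab
    have h1 : (a • p + (1 - a) • q).1 = a • p.1 + (1 - a) • q.1 := by simp
    have h2 : (a • p + (1 - a) • q).2 = a * p.2 + (1 - a) * q.2 := by simp [smul_eq_mul]
    refine ⟨by rw [h1]; exact hmem, ?_, ?_⟩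
    · rw [h2]
      have := mul_nonneg ha hp2
      have := mul_nonneg hb hq2
      linarith
    · rw [h2]
      have key : a * g ⟨p.1, hp1⟩ + (1 - a) * g ⟨q.1, hq1⟩
          ≤ g ⟨(a • p + (1 - a) • q).1, by rw [h1]; exact hmem⟩ :=
        hgconc ⟨p.1, hp1⟩ ⟨q.1, hq1⟩ ⟨(a • p + (1 - a) • q).1, by rw [h1]; exact hmem⟩ a ha ha1 h1
      refine le_trans (add_le_add (mul_le_mul_of_nonneg_left hp3 ha)
        (mul_le_mul_of_nonneg_left hq3 hb)) ?_
      exact key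
  have hAsub : A ⊆ K ×ˢ Icc 0 M := by
    rintro p ⟨hv, h0, hle⟩
    exact ⟨hv, h0, hle.trans (hM _)⟩
  have hAcomp : IsCompact A := by
    rw [isCompact_iff_ultrafilter_le_nhds]
    intro F hF
    have hF' : ↑F ≤ 𝓟 (K ×ˢ Icc 0 M) := le_trans hF (principal_mono.mpr hAsub)
    obtain ⟨p, hpmem, hFp⟩ := (hKc.prod isCompact_Icc).ultrafilter_le_nhds F hF'
    obtain ⟨p1, p2⟩ := p
    obtain ⟨hv, h0M⟩ := hpmem
    refine ⟨(p1, p2), ⟨hv, h0M.1, ?_⟩, hFp⟩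
    by_contra hgt
    push_neg at hgt
    set x : K := ⟨p1, hv⟩ with hxdef
    set y : ℝ := (g x + p2) / 2 with hydef
    have hy1 : g x < y := by rw [hydef]; simp only [hxdef]; linarith
    have hy2 : y < p2 := by rw [hydef]; simp only [hxdef]; linarith
    have hev : {w : K | g w < y} ∈ 𝓝 x := husc x y hy1
    rw [nhds_subtype_eq_comap, mem_comap] at hev
    obtain ⟨W, hW, hWsub⟩ := hev
    have hS : W ×ˢ Ioi y ∈ 𝓝 ((p1 : V), p2) := prod_mem_nhds hW (Ioi_mem_nhds hy2)
    have h1 : W ×ˢ Ioi y ∈ F := hFp hS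
    have h2 : A ∈ F := le_principal_iff.mp hF
    obtain ⟨q, hqS, hqA⟩ := Filter.nonempty_of_mem (inter_mem h1 h2)
    obtain ⟨hqv, hq0, hqle⟩ := hqA
    have hql : g ⟨q.1, hqv⟩ < y := hWsub hqS.1
    have hqg : y < q.2 := hqS.2
    linarith
  -- the supharmonic inequality
  intro b Q hQprob hQbary
  haveI := hQprob
  have hmeas : Measurable g := husc.measurable
  have hint : Integrable g Q := (integrable_const M).mono' hmeas.aestronglyMeasurable
    (Filter.Eventually.of_forall fun x => by
      rw [Real.norm_eq_abs, abs_of_nonneg (hg0 x)]; exact hM x)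
  by_contra hcon
  rw [not_le] at hcon
  set c : ℝ := ∫ x, g x ∂Q with hcdef
  -- (b, c) is not in A and is "separated" from A
  have hpnot : ((b : V), c) ∉ A := by
    rintro ⟨hv, -, hle⟩
    have hbb : (⟨(b : V), hv⟩ : K) = b := Subtype.ext rfl
    rw [hbb] at hle
    exact absurd hle (not_le.mpr hcon)
  have hdisj : Disjoint A (closure {((b : V), c)}) := by
    rw [Set.disjoint_left]
    intro p hpA hpc
    have hsp : ((b : V), c) ⤳ p := specializes_iff_mem_closure.mpr hpc
    have h2 : c = p.2 := (hsp.map continuous_snd).eq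
    obtain ⟨hv, h0, hle⟩ := hpA
    have h1 : ((b : V) : V) ⤳ p.1 := hsp.map continuous_fst
    have h1' : b ⤳ (⟨p.1, hv⟩ : K) := (subtype_specializes_iff _ _).mpr h1
    have hbeq : b = (⟨p.1, hv⟩ : K) := h1'.eq
    rw [← hbeq] at hle
    rw [← h2] at hle
    exact absurd hle (not_le.mpr hcon)
  obtain ⟨φ, u', v', hAlt, huv, hcl⟩ := geometric_hahn_banach_compact_closed hAconv hAcomp
    ((convex_singleton _).closure) isClosed_closure hdisj
  have hbc : v' < φ ((b : V), c) := hcl _ (subset_closure rfl)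
  have hlin : ∀ (v : V) (r : ℝ), φ (v, r) = φ (v, 0) + r * φ ((0 : V), (1 : ℝ)) := by
    intro v r
    have h : (v, r) = (v, (0 : ℝ)) + r • ((0 : V), (1 : ℝ)) := by
      ext
      · simp
      · simp
    rw [h, map_add, _root_.map_smul, smul_eq_mul]
  set s0 : ℝ := φ ((0 : V), (1 : ℝ)) with hs0def
  set ψ : K → ℝ := fun x => φ ((x : V), 0) with hψdef
  have hgA : ∀ x : K, ψ x + g x * s0 < u' := by
    intro x
    have hx : ((x : V), g x) ∈ A := ⟨x.2, hg0 x, le_of_eq (congrArg g (Subtype.ext rfl)).symm⟩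
    have := hAlt _ hx
    rwa [hlin] at this
  have hbc' : v' < ψ b + c * s0 := by
    have := hbc
    rwa [hlin] at this
  have hs0 : 0 < s0 := by
    by_contra hns
    push_neg at hns
    have h1 : c * s0 ≤ g b * s0 := mul_le_mul_of_nonpos_right hcon.le hns
    have h2 := hgA b
    linarith
  set a : K → ℝ := fun x => (u' - ψ x) / s0 with hadef
  have hga : ∀ x, g x ≤ a x := by
    intro x
    rw [hadef]
    rw [le_div_iff₀ hs0]
    have := hgA x
    linarith
  have hacont : Continuous a := by
    rw [hadef]
    exact (continuous_const.sub
      (φ.continuous.comp (continuous_subtype_val.prodMk continuous_const))).div_const _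
  have haaff : AffineOnSet K a := by
    intro x y z t ht0 ht1 hz
    have hψz : ψ z = t * ψ x + (1 - t) * ψ y := by
      have h : ((z : V), (0 : ℝ)) = t • ((x : V), (0 : ℝ)) + (1 - t) • ((y : V), (0 : ℝ)) := by
        ext
        · simpa using hz
        · simp
      rw [hψdef]
      show φ ((z : V), (0:ℝ)) = t * φ ((x : V), (0:ℝ)) + (1 - t) * φ ((y : V), (0:ℝ))
      rw [h, map_add, _root_.map_smul, _root_.map_smul, smul_eq_mul, smul_eq_mul]
    rw [hadef]
    show (u' - ψ z) / s0 = t * ((u' - ψ x) / s0) + (1 - t) * ((u' - ψ y) / s0)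
    rw [hψz]
    field_simp
    ring
  have hintA : Integrable a Q := by
    obtain ⟨C, hC⟩ := isCompact_univ.exists_bound_of_continuousOn hacont.continuousOn
    exact (integrable_const C).mono' hacont.aestronglyMeasurable
      (Filter.Eventually.of_forall fun x => hC x (mem_univ x))
  have h1 : c ≤ ∫ x, a x ∂Q := integral_mono hint hintA hga
  have h2 : ∫ x, a x ∂Q = a b := (hQbary a hacont haaff).symm
  have h3 : a b < c := by
    rw [hadef]
    show (u' - ψ b) / s0 < c
    rw [div_lt_iff₀ hs0]
    linarith
  rw [h2] at h1
  linarith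

end Suph

end ChoquetAux

/-- **Concavity and supharmonicity of the transfinite sequence** (Fact 2.5 (5)): if `H` is a
harmonic candidate sequence on a metrizable Choquet simplex `K`, then for every ordinal `γ`
the function `u_γ^H` is concave; moreover, whenever `u_γ^H` is real-valued (hence u.s.c.),
it is supharmonic. -/
theorem uSeq_concave_supharmonic
    {V : Type*} [AddCommGroup V] [Module ℝ V] [TopologicalSpace V] [IsTopologicalAddGroup V]
    [ContinuousSMul ℝ V] [LocallyConvexSpace ℝ V] [MeasurableSpace V] [BorelSpace V]
    (K : Set V) (hKc : IsCompact K) (hKconv : Convex ℝ K)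
    (hKmetr : TopologicalSpace.MetrizableSpace K)
    (P : K → MeasureTheory.Measure K) (hP : IsChoquetKernel K P)
    (H : CandidateSeq K) (hharm : ∀ k, HarmonicOnSet K (H.h k)) (γ : Ordinal) :
    (∀ (x y z : K) (t : ℝ), 0 ≤ t → t ≤ 1 →
        (z : V) = t • (x : V) + (1 - t) • (y : V) →
        ENNReal.ofReal t * H.u γ x + ENNReal.ofReal (1 - t) * H.u γ y ≤ H.u γ z) ∧
      ((∀ x, H.u γ x ≠ ⊤) →
        SupharmonicOnSet K (fun x : K => (H.u γ x).toReal)) := by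
  classical
  haveI := hKmetr
  open ChoquetAux in
  have haffk : ∀ k, AffineOnSet K (H.h k) := fun k => affine_of_harmonic hKmetr (hharm k)
  have htail_aff : ∀ k, AffineOnSet K (fun x => H.limFn x - H.h k x) := tail_affine H haffk
  have hconc : ∀ δ : Ordinal, EConc K (H.u δ) := by
    intro δ
    induction δ using Ordinal.limitRecOn with
    | zero =>
      rw [u_zero]
      intro x y z t _ _ _
      simp
    | add_one α IH =>
      rw [Ordinal.add_one_eq_succ, u_succ]
      refine EConc.iInf' fun k => ?_
      refine EConc.uscEnv' hKconv ?_
      exact EConc.add' IH (econc_ofReal_affine (tail_nonneg H k) (htail_aff k))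
    | limit o ho IH =>
      rw [u_limit H o ho]
      refine EConc.uscEnv' hKconv ?_
      haveI : Nonempty {β : Ordinal // β < o} := ⟨⟨0, ho.pos⟩⟩
      refine econc_iSup_of_dir ?_ (fun p => IH p.1 p.2)
      intro p q
      rcases le_total p.1 q.1 with h | h
      · exact Or.inl fun x => u_mono H q.1 p.1 h x
      · exact Or.inr fun x => u_mono H p.1 q.1 h x
  constructor
  · exact fun x y z t ht0 ht1 hz => hconc γ x y z t ht0 ht1 hz
  · intro hfin
    set g : K → ℝ := fun x => (H.u γ x).toReal with hgdef
    have husc : UpperSemicontinuous g := by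
      intro x r hr
      have h1 : H.u γ x < ENNReal.ofReal r := by
        rw [ENNReal.lt_ofReal_iff_toReal_lt (hfin x)]
        exact hr
      exact (u_usc H γ x _ h1).mono fun w hw => ENNReal.toReal_lt_of_lt_ofReal hw
    have hg0 : ∀ x, 0 ≤ g x := fun x => ENNReal.toReal_nonneg
    have hgconc : ∀ (x y z : K) (t : ℝ), 0 ≤ t → t ≤ 1 →
        (z : V) = t • (x : V) + (1 - t) • (y : V) → t * g x + (1 - t) * g y ≤ g z := by
      intro x y z t ht0 ht1 hz
      have h := hconc γ x y z t ht0 ht1 hz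
      have hxne : ENNReal.ofReal t * H.u γ x ≠ ⊤ :=
        ENNReal.mul_ne_top ENNReal.ofReal_ne_top (hfin x)
      have hyne : ENNReal.ofReal (1 - t) * H.u γ y ≠ ⊤ :=
        ENNReal.mul_ne_top ENNReal.ofReal_ne_top (hfin y)
      have h2 := ENNReal.toReal_mono (hfin z) h
      rwa [ENNReal.toReal_add hxne hyne, ENNReal.toReal_mul, ENNReal.toReal_mul,
        ENNReal.toReal_ofReal ht0, ENNReal.toReal_ofReal (by linarith : (0:ℝ) ≤ 1 - t)] at h2
    exact supharmonic_of_usc_concave hKc hKconv hKmetr husc hg0 hgconc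
end

section
/- Let d ∈ {1,2} and let 𝔻 be the closed unit ball in ℝ^d. Let Q = {q_k : k ∈ ℕ} be a countable set of pairwise distinct points contained in the interior of 𝔻. Then there exist a summable sequence (ε_k)_{k∈ℕ} of positive real numbers, a sequence of points (p_k)_{k∈ℕ} such that each closed ball B̄(p_k, ε_k) is contained in the interior of 𝔻, and a map π : 𝔻 → 𝔻 such that: (1) π is continuous and surjective; (2) π^{−1}({q_k}) = B̄(p_k, ε_k) for each k; and (3) the restriction of π to 𝔻 ∖ ∪_k B̄(p_k, ε_k) is a homeomorphism onto its image, which equals 𝔻 ∖ Q. -/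
open Filter Topology Set Metric

noncomputable section

namespace Blowup

variable {E : Type*} [NormedAddCommGroup E] [NormedSpace ℝ E]

/-- radial profile of the squash map -/
def nfun (r t : ℝ) : ℝ := max 0 (min t (2*t - r))

/-- radial profile of the (partial) inverse -/
def mfun (r t : ℝ) : ℝ := max t ((t + r)/2)

/-- the squash map: collapses `closedBall p (r/2)` to `p`, identity outside `ball p r`. -/
def sq (p : E) (r : ℝ) (x : E) : E := p + ((nfun r ‖x - p‖)/‖x - p‖) • (x - p)

/-- partial inverse of `sq`. -/
def su (p : E) (r : ℝ) (y : E) : E := p + ((mfun r ‖y - p‖)/‖y - p‖) • (y - p)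

lemma nfun_nonneg (r t : ℝ) : 0 ≤ nfun r t := le_max_left _ _

lemma mfun_nonneg {r t : ℝ} (hr : 0 < r) (ht : 0 ≤ t) : 0 ≤ mfun r t :=
  le_trans ht (le_max_left _ _)

lemma nfun_le {r t : ℝ} (ht : 0 ≤ t) : nfun r t ≤ t :=
  max_le ht (le_trans (min_le_left _ _) le_rfl)

lemma nfun_of_ge {r t : ℝ} (hr : 0 < r) (h : r ≤ t) : nfun r t = t := by
  have h1 : min t (2*t - r) = t := min_eq_left (by linarith)
  rw [nfun, h1, max_eq_right (by linarith)]

lemma nfun_of_le {r t : ℝ} (h : t ≤ r/2) : nfun r t = 0 := by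
  have h1 : min t (2*t - r) ≤ 2*t - r := min_le_right _ _
  rw [nfun, max_eq_left (by linarith)]

lemma nfun_mid {r t : ℝ} (h1 : r/2 < t) (h2 : t ≤ r) : nfun r t = 2*t - r := by
  have : min t (2*t - r) = 2*t - r := min_eq_right (by linarith)
  rw [nfun, this, max_eq_right (by linarith)]

lemma mfun_of_ge {r t : ℝ} (h : r ≤ t) : mfun r t = t :=
  max_eq_left (by rw [div_le_iff₀ (by norm_num : (0:ℝ) < 2)]; linarith)

lemma mfun_of_le {r t : ℝ} (h : t ≤ r) : mfun r t = (t + r)/2 :=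
  max_eq_right (by rw [le_div_iff₀ (by norm_num : (0:ℝ) < 2)]; linarith)

lemma sq_self (p : E) (r : ℝ) : sq p r p = p := by
  simp [sq]

lemma sq_dist (p : E) (r : ℝ) (x : E) : ‖sq p r x - p‖ = nfun r ‖x - p‖ := by
  rcases eq_or_ne x p with h | h
  · simp [h, sq, nfun]
  · have ht : ‖x - p‖ ≠ 0 := by simpa [sub_eq_zero] using h
    have ht' : 0 < ‖x - p‖ := lt_of_le_of_ne (norm_nonneg _) (Ne.symm ht)
    rw [sq, add_sub_cancel_left, norm_smul, Real.norm_eq_abs,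
      abs_of_nonneg (div_nonneg (nfun_nonneg _ _) (norm_nonneg _)), div_mul_cancel₀ _ ht]

lemma sq_of_ge {p : E} {r : ℝ} (hr : 0 < r) {x : E} (h : r ≤ ‖x - p‖) : sq p r x = x := by
  have ht : ‖x - p‖ ≠ 0 := (hr.trans_le h).ne'
  rw [sq, nfun_of_ge hr h, div_self ht, one_smul, add_sub_cancel]

lemma sq_of_le {p : E} {r : ℝ} {x : E} (h : ‖x - p‖ ≤ r/2) : sq p r x = p := by
  rw [sq, nfun_of_le h]; simp

lemma sq_eq_center {p : E} {r : ℝ} (hr : 0 < r) {x : E} (h : sq p r x = p) :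
    ‖x - p‖ ≤ r/2 := by
  by_contra hc
  push_neg at hc
  have := sq_dist p r x
  rw [h, sub_self, norm_zero] at this
  rcases le_or_gt ‖x - p‖ r with h2 | h2
  · rw [nfun_mid hc h2] at this; linarith
  · rw [nfun_of_ge hr h2.le] at this; linarith

lemma sq_dist_le (p : E) (r : ℝ) (x : E) : ‖sq p r x - p‖ ≤ ‖x - p‖ := by
  rw [sq_dist]; exact nfun_le (norm_nonneg _)

lemma sq_moved {p : E} {r : ℝ} (hr : 0 < r) (x : E) : ‖sq p r x - x‖ ≤ r := by
  rcases eq_or_ne x p with h | h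
  · simp [h, sq_self, hr.le]
  · have ht : (0:ℝ) < ‖x - p‖ := by simpa [sub_eq_zero] using norm_pos_iff.2 (sub_ne_zero.2 h)
    have hxp : sq p r x - x = ((nfun r ‖x - p‖)/‖x - p‖ - 1) • (x - p) := by
      rw [sq]; rw [sub_smul, one_smul]; abel
    rw [hxp, norm_smul, Real.norm_eq_abs, abs_sub_comm, abs_of_nonneg, sub_mul,
      div_mul_cancel₀ _ ht.ne', one_mul]
    · rcases le_or_gt ‖x - p‖ (r/2) with h2 | h2
      · rw [nfun_of_le h2]; linarith
      · rcases le_or_gt ‖x - p‖ r with h3 | h3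
        · rw [nfun_mid h2 h3]; linarith
        · rw [nfun_of_ge hr h3.le]; simpa using hr.le
    · rw [sub_nonneg, div_le_one ht]; exact nfun_le (norm_nonneg _)

lemma su_self (p : E) (r : ℝ) : su p r p = p := by simp [su]

lemma su_dist {p : E} {r : ℝ} (hr : 0 < r) {y : E} (h : y ≠ p) :
    ‖su p r y - p‖ = mfun r ‖y - p‖ := by
  have ht : ‖y - p‖ ≠ 0 := by simpa [sub_eq_zero] using h
  have ht' : 0 < ‖y - p‖ := lt_of_le_of_ne (norm_nonneg _) (Ne.symm ht)
  rw [su, add_sub_cancel_left, norm_smul, Real.norm_eq_abs,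
    abs_of_nonneg (div_nonneg (mfun_nonneg hr (norm_nonneg _)) (norm_nonneg _)),
    div_mul_cancel₀ _ ht]

lemma su_of_ge {p : E} {r : ℝ} {y : E} (h : r ≤ ‖y - p‖) : su p r y = y := by
  rcases eq_or_ne y p with hy | hy
  · rw [hy, su_self]
  · have ht : ‖y - p‖ ≠ 0 := by simpa [sub_eq_zero] using hy
    rw [su, mfun_of_ge h, div_self ht, one_smul, add_sub_cancel]

lemma su_dist_le {p : E} {r : ℝ} (hr : 0 < r) {y : E} (h : ‖y - p‖ ≤ r) :
    ‖su p r y - p‖ ≤ r := by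
  rcases eq_or_ne y p with hy | hy
  · simp [hy, su_self, hr.le]
  · rw [su_dist hr hy, mfun_of_le h]; linarith

lemma su_dist_gt {p : E} {r : ℝ} (hr : 0 < r) {y : E} (hy : y ≠ p) :
    r/2 < ‖su p r y - p‖ := by
  have ht : 0 < ‖y - p‖ := norm_pos_iff.2 (sub_ne_zero.2 hy)
  rw [su_dist hr hy]
  rcases le_or_gt r ‖y - p‖ with h | h
  · rw [mfun_of_ge h]; linarith
  · rw [mfun_of_le h.le]; linarith

lemma su_moved {p : E} {r : ℝ} (hr : 0 < r) (y : E) : ‖su p r y - y‖ ≤ r := by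
  rcases eq_or_ne y p with hy | hy
  · simp [hy, su_self, hr.le]
  · have ht : (0:ℝ) < ‖y - p‖ := norm_pos_iff.2 (sub_ne_zero.2 hy)
    have hxp : su p r y - y = ((mfun r ‖y - p‖)/‖y - p‖ - 1) • (y - p) := by
      rw [su, sub_smul, one_smul]; abel
    rw [hxp, norm_smul, Real.norm_eq_abs, abs_of_nonneg, sub_mul,
      div_mul_cancel₀ _ ht.ne', one_mul]
    · rcases le_or_gt r ‖y - p‖ with h | h
      · rw [mfun_of_ge h]; simpa using hr.le
      · rw [mfun_of_le h.le]; linarith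
    · rw [sub_nonneg, le_div_iff₀ ht, one_mul]; exact le_max_left _ _

lemma su_mem_of_lt {p : E} {r : ℝ} (hr : 0 < r) {y : E} (h : ‖y - p‖ < r) :
    ‖su p r y - p‖ ≤ r := su_dist_le hr h.le

/-- either `su` fixes `y`, or both `y` and `su y` lie in `closedBall p r`. -/
lemma su_cases {p : E} {r : ℝ} (hr : 0 < r) (y : E) :
    su p r y = y ∨ (‖y - p‖ ≤ r ∧ ‖su p r y - p‖ ≤ r) := by
  rcases le_or_gt r ‖y - p‖ with h | h
  · exact Or.inl (su_of_ge h)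
  · exact Or.inr ⟨h.le, su_dist_le hr h.le⟩

lemma sq_cases {p : E} {r : ℝ} (hr : 0 < r) (x : E) :
    sq p r x = x ∨ (‖x - p‖ ≤ r ∧ ‖sq p r x - p‖ ≤ r) := by
  rcases le_or_gt r ‖x - p‖ with h | h
  · exact Or.inl (sq_of_ge hr h)
  · exact Or.inr ⟨h.le, (sq_dist_le p r x).trans h.le⟩

lemma sq_su (p : E) {r : ℝ} (hr : 0 < r) (y : E) : sq p r (su p r y) = y := by
  rcases eq_or_ne y p with hy | hy
  · rw [hy, su_self, sq_of_le (by simp; linarith)]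
  · have ht : (0:ℝ) < ‖y - p‖ := norm_pos_iff.2 (sub_ne_zero.2 hy)
    rcases le_or_gt r ‖y - p‖ with h | h
    · rw [su_of_ge h, sq_of_ge hr h]
    · set t := ‖y - p‖ with htdef
      have hmf : mfun r t = (t + r)/2 := mfun_of_le h.le
      have hsu : su p r y - p = ((t + r)/2/t) • (y - p) := by
        rw [su, add_sub_cancel_left, hmf]
      have hdist : ‖su p r y - p‖ = (t + r)/2 := by
        rw [su_dist hr hy, hmf]
      have hnf : nfun r ((t + r)/2) = t := by
        rw [nfun_mid (by linarith) (by linarith)]; ring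
      rw [sq, hdist, hnf, hsu, smul_smul]
      have : t / ((t + r) / 2) * ((t + r) / 2 / t) = 1 := by
        field_simp
      rw [this, one_smul]; abel

lemma su_sq (p : E) {r : ℝ} (hr : 0 < r) {x : E} (h : r/2 < ‖x - p‖) :
    su p r (sq p r x) = x := by
  have ht : (0:ℝ) < ‖x - p‖ := lt_of_le_of_lt (by linarith) h
  rcases le_or_gt r ‖x - p‖ with h2 | h2
  · rw [sq_of_ge hr h2, su_of_ge h2]
  · set t := ‖x - p‖ with htdef
    have hnf : nfun r t = 2*t - r := nfun_mid h h2.le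
    have hsq : sq p r x - p = ((2*t - r)/t) • (x - p) := by
      rw [sq, add_sub_cancel_left, hnf]
    have hdist : ‖sq p r x - p‖ = 2*t - r := by rw [sq_dist, hnf]
    have hmf : mfun r (2*t - r) = t := by
      rw [mfun_of_le (by linarith)]; ring
    rw [su, hdist, hmf, hsq, smul_smul]
    have : t / (2*t - r) * ((2*t - r) / t) = 1 := by
      have h3 : 2*t - r ≠ 0 := by linarith
      field_simp
      exact div_self (by intro h4; apply h3; linarith)
    rw [this, one_smul]; abel

lemma su_inj (p : E) {r : ℝ} (hr : 0 < r) : Function.Injective (su p r) := by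
  intro a b hab
  have := congrArg (sq p r) hab
  rwa [sq_su p hr, sq_su p hr] at this

lemma sq_continuous (p : E) {r : ℝ} (hr : 0 < r) : Continuous (sq p r) := by
  rw [continuous_iff_continuousAt]
  intro x
  unfold sq
  rcases eq_or_ne x p with hx | hx
  · have hev : ∀ᶠ z in 𝓝 x, p = p + ((nfun r ‖z - p‖)/‖z - p‖) • (z - p) := by
      have : Metric.ball p (r/2) ∈ 𝓝 x := by
        apply (Metric.isOpen_ball).mem_nhds
        rw [hx]; exact Metric.mem_ball_self (by linarith)
      filter_upwards [this] with z hz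
      rw [Metric.mem_ball, dist_eq_norm] at hz
      have h2 := sq_of_le (p := p) (r := r) (x := z) hz.le
      rw [sq] at h2
      exact h2.symm
    exact (continuousAt_const (y := p)).congr hev
  · have ht : ‖x - p‖ ≠ 0 := by simpa [sub_eq_zero] using hx
    have hcont : ContinuousAt (fun z : E => ‖z - p‖) x :=
      (continuous_norm.comp (continuous_id.sub continuous_const)).continuousAt
    have hnf : Continuous (nfun r) := by
      unfold nfun
      exact continuous_const.max ((continuous_id).min (by continuity))
    have hn : ContinuousAt (fun z : E => nfun r ‖z - p‖) x := hnf.continuousAt.comp hcont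
    have hsub : ContinuousAt (fun z : E => z - p) x := by fun_prop
    exact ContinuousAt.add continuousAt_const (ContinuousAt.smul (hn.div hcont ht) hsub)

lemma su_continuousAt (p : E) (r : ℝ) {y : E} (hy : y ≠ p) : ContinuousAt (su p r) y := by
  have ht : ‖y - p‖ ≠ 0 := by simpa [sub_eq_zero] using hy
  have hcont : ContinuousAt (fun z : E => ‖z - p‖) y :=
    (continuous_norm.comp (continuous_id.sub continuous_const)).continuousAt
  have hmf : Continuous (mfun r) := by
    unfold mfun
    exact continuous_id.max (by continuity)
  have hm : ContinuousAt (fun z : E => mfun r ‖z - p‖) y := hmf.continuousAt.comp hcont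
  have hsub : ContinuousAt (fun z : E => z - p) y := by fun_prop
  have : ContinuousAt (fun z : E => p + ((mfun r ‖z - p‖)/‖z - p‖) • (z - p)) y :=
    ContinuousAt.add continuousAt_const (ContinuousAt.smul (hm.div hcont ht) hsub)
  exact this

/-! ### The chains of maps -/

variable (q : ℕ → E) (r : ℕ → ℝ)

/-- chain of partial inverses: `Gn (n+1) = su_n ∘ ... ∘ su_0`. -/
def Gn : ℕ → E → E
  | 0 => id
  | n+1 => su (Gn n (q n)) (r n) ∘ Gn n

/-- the centers `p_n`. -/
def Pc (n : ℕ) : E := Gn q r n (q n)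

lemma Gn_succ (n : ℕ) (y : E) :
    Gn q r (n+1) y = su (Pc q r n) (r n) (Gn q r n y) := rfl

/-- chain of squash maps: `Fn (n+1) = sq_0 ∘ ... ∘ sq_n`. -/
def Fn : ℕ → E → E
  | 0 => id
  | n+1 => Fn n ∘ sq (Pc q r n) (r n)

lemma Fn_succ (n : ℕ) (x : E) :
    Fn q r (n+1) x = Fn q r n (sq (Pc q r n) (r n) x) := rfl

/-- the unit disc (in the ambient space). -/
def disc : Set E := Metric.closedBall 0 1

/-- the conditions imposed on the radii. -/
structure Good (n : ℕ) : Prop where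
  pos : 0 < r n
  small : r n ≤ (1/2 : ℝ)^n
  sub : Metric.closedBall (Pc q r n) (r n) ⊆ interior (disc (E := E))
  sep : ∀ j, j < n → r j / 2 < ‖Pc q r n - Pc q r j‖
  sep' : ∀ j, j < n → r n ≤ (1/2 : ℝ)^n * (‖Pc q r n - Pc q r j‖ - r j / 2)
  mod : ∀ x y : E, x ∈ Metric.closedBall (Pc q r n) (r n) →
    y ∈ Metric.closedBall (Pc q r n) (r n) →
    ‖Fn q r n x - Fn q r n y‖ ≤ (1/2 : ℝ)^n

variable {q r}

/-! ### congruence lemmas: everything depends only on a prefix of `r` -/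

lemma Gn_congr {r' : ℕ → ℝ} {n : ℕ} (h : ∀ j, j < n → r j = r' j) :
    Gn q r n = Gn q r' n := by
  induction n with
  | zero => rfl
  | succ n ih =>
    have ih' := ih (fun j hj => h j (hj.trans (Nat.lt_succ_self n)))
    funext y
    rw [Gn_succ, Gn_succ, Pc, Pc, ih', h n (Nat.lt_succ_self n)]

lemma Pc_congr {r' : ℕ → ℝ} {n : ℕ} (h : ∀ j, j < n → r j = r' j) :
    Pc q r n = Pc q r' n := by
  rw [Pc, Pc, Gn_congr h]

lemma Fn_congr {r' : ℕ → ℝ} {n : ℕ} (h : ∀ j, j < n → r j = r' j) :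
    Fn q r n = Fn q r' n := by
  induction n with
  | zero => rfl
  | succ n ih =>
    have hlt : ∀ j, j < n → r j = r' j := fun j hj => h j (hj.trans (Nat.lt_succ_self n))
    funext x
    rw [Fn_succ, Fn_succ, ih hlt, Pc_congr hlt, h n (Nat.lt_succ_self n)]

lemma Good_congr {r' : ℕ → ℝ} {n : ℕ} (h : ∀ j, j ≤ n → r j = r' j)
    (hg : Good q r n) : Good q r' n := by
  have hlt : ∀ j, j < n → r j = r' j := fun j hj => h j hj.le
  have hP : ∀ j, j ≤ n → Pc q r j = Pc q r' j := fun j hj =>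
    Pc_congr (fun i hi => h i (hi.le.trans hj))
  have hn := h n le_rfl
  refine ⟨?_, ?_, ?_, ?_, ?_, ?_⟩
  · rw [← hn]; exact hg.pos
  · rw [← hn]; exact hg.small
  · rw [← hP n le_rfl, ← hn]; exact hg.sub
  · intro j hj; rw [← hP n le_rfl, ← hP j hj.le, ← h j hj.le]; exact hg.sep j hj
  · intro j hj; rw [← hP n le_rfl, ← hP j hj.le, ← h j hj.le, ← hn]; exact hg.sep' j hj
  · intro x y hx hy
    rw [← hP n le_rfl, ← hn] at hx hy
    rw [← Fn_congr hlt]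
    exact hg.mod x y hx hy

/-! ### basic consequences of `Good` -/

lemma Fn_cont {n : ℕ} (h : ∀ j, j < n → 0 < r j) : Continuous (Fn q r n) := by
  induction n with
  | zero => exact continuous_id
  | succ n ih =>
    rw [show Fn q r (n+1) = Fn q r n ∘ sq (Pc q r n) (r n) from rfl]
    exact (ih (fun j hj => h j (hj.trans (Nat.lt_succ_self n)))).comp
      (sq_continuous _ (h n (Nat.lt_succ_self n)))

lemma Gn_maps {n : ℕ} (hg : ∀ j, j < n → Good q r j) {y : E}
    (hy : y ∈ interior (disc (E := E))) : Gn q r n y ∈ interior (disc (E := E)) := by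
  induction n with
  | zero => exact hy
  | succ n ih =>
    have ih' := ih (fun j hj => hg j (hj.trans (Nat.lt_succ_self n)))
    have hgn := hg n (Nat.lt_succ_self n)
    rw [Gn_succ]
    rcases su_cases (p := Pc q r n) hgn.pos (Gn q r n y) with h | h
    · rw [h]; exact ih'
    · exact hgn.sub (by rw [Metric.mem_closedBall, dist_eq_norm]; exact h.2)

lemma Fn_maps {n : ℕ} (hg : ∀ j, j < n → Good q r j) :
    ∀ x : E, x ∈ disc (E := E) → Fn q r n x ∈ disc (E := E) := by
  induction n with
  | zero => exact fun x hx => hx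
  | succ n ih =>
    intro x hx
    have hgn := hg n (Nat.lt_succ_self n)
    rw [Fn_succ]
    apply ih (fun j hj => hg j (hj.trans (Nat.lt_succ_self n)))
    rcases sq_cases (p := Pc q r n) hgn.pos x with h | h
    · rw [h]; exact hx
    · exact interior_subset
        (hgn.sub (by rw [Metric.mem_closedBall, dist_eq_norm]; exact h.2))

lemma Fn_Gn {n : ℕ} (h : ∀ j, j < n → 0 < r j) (y : E) :
    Fn q r n (Gn q r n y) = y := by
  induction n with
  | zero => rfl
  | succ n ih =>
    rw [Gn_succ, Fn_succ, sq_su _ (h n (Nat.lt_succ_self n))]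
    exact ih (fun j hj => h j (hj.trans (Nat.lt_succ_self n)))

lemma Gn_inj {n : ℕ} (h : ∀ j, j < n → 0 < r j) : Function.Injective (Gn q r n) := by
  intro a b hab
  have := congrArg (Fn q r n) hab
  rwa [Fn_Gn h, Fn_Gn h] at this

/-- any point of the support ball at stage `n` is outside the inner ball of stage `j < n`. -/
lemma support_escape {n j : ℕ} (hgn : Good q r n) (hj : j < n) {w : E}
    (hw : ‖w - Pc q r n‖ ≤ r n) : r j / 2 < ‖w - Pc q r j‖ := by
  have hD := hgn.sep j hj
  have hD' := hgn.sep' j hj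
  have hpow : ((1:ℝ)/2)^n ≤ 1/2 := by
    calc ((1:ℝ)/2)^n ≤ (1/2 : ℝ)^1 :=
      pow_le_pow_of_le_one (by norm_num) (by norm_num) (Nat.one_le_iff_ne_zero.2 (by omega))
    _ = 1/2 := pow_one _
  set D := ‖Pc q r n - Pc q r j‖
  have h1 : r n ≤ (D - r j / 2) / 2 := by
    calc r n ≤ (1/2 : ℝ)^n * (D - r j / 2) := hD'
    _ ≤ (1/2) * (D - r j / 2) := by
        apply mul_le_mul_of_nonneg_right hpow (by linarith)
    _ = (D - r j / 2) / 2 := by ring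
  have h2 : D - ‖w - Pc q r n‖ ≤ ‖w - Pc q r j‖ := by
    have := norm_sub_le_norm_sub_add_norm_sub (Pc q r n) w (Pc q r j)
    have h3 : ‖Pc q r n - w‖ = ‖w - Pc q r n‖ := norm_sub_rev _ _
    linarith [norm_sub_le_norm_sub_add_norm_sub (Pc q r n) w (Pc q r j)]
  linarith

lemma Gn_escape {n j : ℕ} (hg : ∀ i, i < n → Good q r i) (hj : j < n) {y : E}
    (hy : y ≠ q j) : r j / 2 < ‖Gn q r n y - Pc q r j‖ := by
  induction n with
  | zero => omega
  | succ n ih =>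
    have hg' : ∀ i, i < n → Good q r i := fun i hi => hg i (hi.trans (Nat.lt_succ_self n))
    have hgn := hg n (Nat.lt_succ_self n)
    have hpos : ∀ i, i < n → 0 < r i := fun i hi => (hg' i hi).pos
    rcases Nat.lt_succ_iff_lt_or_eq.mp hj with hjn | hjn
    · rw [Gn_succ]
      rcases su_cases (p := Pc q r n) hgn.pos (Gn q r n y) with h | h
      · rw [h]; exact ih hg' hjn
      · exact support_escape hgn hjn h.2
    · have hne : Gn q r n y ≠ Pc q r n := by
        intro hcon
        exact hy (by rw [hjn]; exact Gn_inj hpos hcon)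
      have hgt := su_dist_gt hgn.pos hne
      rw [Gn_succ, hjn]
      exact hgt

/-- points in the inner ball at stage `j` are far from the support at stage `n > j`. -/
lemma support_avoid {n j : ℕ} (hgn : Good q r n) (hj : j < n) {x : E}
    (hx : ‖x - Pc q r j‖ ≤ r j / 2) : r n ≤ ‖x - Pc q r n‖ := by
  have hD := hgn.sep j hj
  have hD' := hgn.sep' j hj
  have hpow : ((1:ℝ)/2)^n ≤ 1/2 := by
    calc ((1:ℝ)/2)^n ≤ (1/2 : ℝ)^1 :=
      pow_le_pow_of_le_one (by norm_num) (by norm_num) (by omega)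
    _ = 1/2 := pow_one _
  set D := ‖Pc q r n - Pc q r j‖ with hDdef
  have h1 : r n ≤ (D - r j / 2) / 2 := by
    calc r n ≤ (1/2 : ℝ)^n * (D - r j / 2) := hD'
    _ ≤ (1/2) * (D - r j / 2) := mul_le_mul_of_nonneg_right hpow (by linarith)
    _ = (D - r j / 2) / 2 := by ring
  have h2 : D - ‖x - Pc q r j‖ ≤ ‖x - Pc q r n‖ := by
    have h3 := norm_sub_le_norm_sub_add_norm_sub (Pc q r n) x (Pc q r j)
    have h4 : ‖Pc q r n - x‖ = ‖x - Pc q r n‖ := norm_sub_rev _ _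
    linarith
  linarith

lemma sq_preserve {i j : ℕ} (hgi : Good q r i) (hj : j < i) {x : E}
    (hx : r j / 2 < ‖x - Pc q r j‖) :
    r j / 2 < ‖sq (Pc q r i) (r i) x - Pc q r j‖ := by
  rcases sq_cases (p := Pc q r i) hgi.pos x with h | h
  · rw [h]; exact hx
  · exact support_escape hgi hj h.2

lemma Fn_collapse {k : ℕ} (hg : ∀ i, Good q r i) :
    ∀ n, k < n → ∀ x : E, ‖x - Pc q r k‖ ≤ r k / 2 → Fn q r n x = q k := by
  intro n
  induction n with
  | zero => omega
  | succ n ih =>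
    intro hk x hx
    rcases Nat.lt_succ_iff_lt_or_eq.mp hk with hkn | hkn
    · rw [Fn_succ]
      apply ih hkn
      have hfix : sq (Pc q r n) (r n) x = x :=
        sq_of_ge (hg n).pos (support_avoid (hg n) hkn hx)
      rw [hfix]; exact hx
    · subst hkn
      rw [Fn_succ, sq_of_le hx, Pc, Fn_Gn (fun j _ => (hg j).pos)]

lemma Gn_stab {k : ℕ} (hg : ∀ i, Good q r i) :
    ∀ n, k < n → Gn q r n (q k) = Pc q r k := by
  intro n
  induction n with
  | zero => omega
  | succ n ih =>
    intro hk
    rcases Nat.lt_succ_iff_lt_or_eq.mp hk with hkn | hkn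
    · rw [Gn_succ, ih hkn]
      exact su_of_ge (support_avoid (hg n) hkn
        (by rw [sub_self, norm_zero]; linarith [(hg k).pos]))
    · subst hkn
      rw [Gn_succ, Pc, su_self]

lemma Fn_cauchy {n : ℕ} (hgn : Good q r n) (x : E) :
    ‖Fn q r (n+1) x - Fn q r n x‖ ≤ (1/2 : ℝ)^n := by
  rw [Fn_succ]
  rcases sq_cases (p := Pc q r n) hgn.pos x with h | h
  · rw [h, sub_self, norm_zero]; positivity
  · exact hgn.mod _ _ (by rw [Metric.mem_closedBall, dist_eq_norm]; exact h.2)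
      (by rw [Metric.mem_closedBall, dist_eq_norm]; exact h.1)

lemma Gn_cauchy {n : ℕ} (hgn : Good q r n) (y : E) :
    ‖Gn q r (n+1) y - Gn q r n y‖ ≤ (1/2 : ℝ)^n := by
  rw [Gn_succ]
  exact le_trans (su_moved hgn.pos _) hgn.small

lemma Gn_Fn {n : ℕ} (hg : ∀ i, i < n → Good q r i) :
    ∀ x : E, (∀ j, j < n → r j / 2 < ‖x - Pc q r j‖) → Gn q r n (Fn q r n x) = x := by
  induction n with
  | zero => exact fun x _ => rfl
  | succ n ih =>
    intro x hx
    have hg' : ∀ i, i < n → Good q r i := fun i hi => hg i (hi.trans (Nat.lt_succ_self n))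
    have hgn := hg n (Nat.lt_succ_self n)
    set z := sq (Pc q r n) (r n) x with hz
    have hzx : ∀ j, j < n → r j / 2 < ‖z - Pc q r j‖ := fun j hj =>
      sq_preserve hgn hj (hx j (hj.trans (Nat.lt_succ_self n)))
    rw [Fn_succ, Gn_succ, ← hz, ih hg' z hzx]
    exact su_sq _ hgn.pos (hx n (Nat.lt_succ_self n))

lemma su_drift {i k : ℕ} (hgi : Good q r i) (hk : k < i) {w : E} {γ : ℝ} (hγ : 0 ≤ γ)
    (hw : ‖w - Pc q r k‖ ≤ r k / 2 + γ) :
    ‖su (Pc q r i) (r i) w - Pc q r k‖ ≤ r k / 2 + γ * (1 + 4 * (1/2 : ℝ)^i) := by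
  have hpowpos : (0:ℝ) < (1/2 : ℝ)^i := by positivity
  rcases le_or_gt (r i) ‖w - Pc q r i‖ with h | h
  · rw [su_of_ge h]
    nlinarith
  · have hout : ‖su (Pc q r i) (r i) w - Pc q r i‖ ≤ r i := su_dist_le hgi.pos h.le
    have hD := hgi.sep k hk
    have hD' := hgi.sep' k hk
    set D := ‖Pc q r i - Pc q r k‖ with hDdef
    have hpow : ((1:ℝ)/2)^i ≤ 1/2 := by
      calc ((1:ℝ)/2)^i ≤ (1/2 : ℝ)^1 :=
        pow_le_pow_of_le_one (by norm_num) (by norm_num) (by omega)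
      _ = 1/2 := pow_one _
    have hDle : D ≤ ‖w - Pc q r k‖ + ‖w - Pc q r i‖ := by
      have h3 := norm_sub_le_norm_sub_add_norm_sub (Pc q r i) w (Pc q r k)
      have h4 : ‖Pc q r i - w‖ = ‖w - Pc q r i‖ := norm_sub_rev _ _
      linarith
    -- D - r k / 2 ≤ 2 γ
    have key : D - r k / 2 ≤ 2 * γ := by nlinarith
    have hri : r i ≤ (1/2 : ℝ)^i * (2 * γ) :=
      le_trans hD' (mul_le_mul_of_nonneg_left key hpowpos.le)
    have hfin : ‖su (Pc q r i) (r i) w - Pc q r k‖ ≤ D + r i := by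
      have h3 := norm_sub_le_norm_sub_add_norm_sub (su (Pc q r i) (r i) w) (Pc q r i) (Pc q r k)
      have h4 : ‖Pc q r i - Pc q r k‖ = D := rfl
      linarith
    nlinarith

lemma Gn_drift (hg : ∀ i, Good q r i) {k : ℕ} {y : E} {γ : ℝ} (hγ : 0 ≤ γ)
    (hbase : ‖Gn q r (k+1) y - Pc q r k‖ ≤ r k / 2 + γ) :
    ∀ n, k + 1 ≤ n →
      ‖Gn q r n y - Pc q r k‖ ≤ r k / 2 +
        γ * Real.exp (∑ i ∈ Finset.Ico (k+1) n, 4 * (1/2 : ℝ)^i) := by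
  intro n
  induction n with
  | zero => omega
  | succ n ih =>
    intro hn
    rcases Nat.lt_succ_iff_lt_or_eq.mp hn with hn' | hn'
    · have hn'' : k + 1 ≤ n := hn'
      have ihn := ih hn''
      have step := su_drift (i := n) (k := k) (hg n) hn' (by positivity) ihn
      rw [Gn_succ]
      refine le_trans step ?_
      have hexp : (1 : ℝ) + 4 * (1/2 : ℝ)^n ≤ Real.exp (4 * (1/2 : ℝ)^n) := by
        have := Real.add_one_le_exp (4 * (1/2 : ℝ)^n)
        linarith
      have h5 : γ * Real.exp (∑ i ∈ Finset.Ico (k+1) n, 4 * (1/2:ℝ)^i) * (1 + 4 * (1/2:ℝ)^n)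
          ≤ γ * Real.exp (∑ i ∈ Finset.Ico (k+1) (n+1), 4 * (1/2:ℝ)^i) := by
        rw [Finset.sum_Ico_succ_top hn'', Real.exp_add, ← mul_assoc]
        apply mul_le_mul_of_nonneg_left hexp
        positivity
      linarith
    · subst hn'
      simpa using hbase

lemma sum_exp_bound (k n : ℕ) :
    Real.exp (∑ i ∈ Finset.Ico (k+1) n, 4 * (1/2 : ℝ)^i) ≤ Real.exp 8 := by
  apply Real.exp_le_exp.2
  calc ∑ i ∈ Finset.Ico (k+1) n, 4 * (1/2 : ℝ)^i
      ≤ ∑ i ∈ Finset.range n, 4 * (1/2 : ℝ)^i := by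
        apply Finset.sum_le_sum_of_subset_of_nonneg
        · intro i hi
          rw [Finset.mem_range]
          exact (Finset.mem_Ico.mp hi).2
        · intro i _ _; positivity
    _ = 4 * ∑ i ∈ Finset.range n, (1/2 : ℝ)^i := by rw [Finset.mul_sum]
    _ ≤ 4 * 2 := by
        apply mul_le_mul_of_nonneg_left ?_ (by norm_num)
        exact sum_geometric_two_le n
    _ = 8 := by norm_num

lemma Gn_contAt {n : ℕ} (hpos : ∀ j, j < n → 0 < r j) {y : E}
    (hy : ∀ j, j < n → y ≠ q j) : ContinuousAt (Gn q r n) y := by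
  induction n with
  | zero => exact continuousAt_id
  | succ n ih =>
    have hpos' : ∀ j, j < n → 0 < r j := fun j hj => hpos j (hj.trans (Nat.lt_succ_self n))
    have ihn := ih hpos' (fun j hj => hy j (hj.trans (Nat.lt_succ_self n)))
    have hne : Gn q r n y ≠ Pc q r n := by
      intro hcon
      exact hy n (Nat.lt_succ_self n) (Gn_inj hpos' hcon)
    exact ContinuousAt.comp (su_continuousAt _ _ hne) ihn

/-! ### choosing the radii -/

lemma exists_pos_le {n : ℕ} (f : ℕ → ℝ) (hf : ∀ j, j < n → 0 < f j) :
    ∃ ρ : ℝ, 0 < ρ ∧ ∀ j, j < n → ρ ≤ f j := by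
  induction n with
  | zero => exact ⟨1, one_pos, fun j hj => absurd hj (by omega)⟩
  | succ n ih =>
    obtain ⟨ρ, hρ, hle⟩ := ih (fun j hj => hf j (hj.trans (Nat.lt_succ_self n)))
    refine ⟨min ρ (f n), lt_min hρ (hf n (Nat.lt_succ_self n)), fun j hj => ?_⟩
    rcases Nat.lt_succ_iff_lt_or_eq.mp hj with h | h
    · exact le_trans (min_le_left _ _) (hle j h)
    · rw [h]; exact min_le_right _ _

lemma ex_step (q : ℕ → E) (r : ℕ → ℝ) (n : ℕ) :
    ∃ ρ : ℝ,
      ((∀ k, q k ∈ interior (disc (E := E))) ∧ Function.Injective q ∧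
        (∀ j, j < n → Good q r j)) →
      Good q (Function.update r n ρ) n := by
  by_cases H : (∀ k, q k ∈ interior (disc (E := E))) ∧ Function.Injective q ∧
      (∀ j, j < n → Good q r j)
  swap
  · exact ⟨1, fun h => absurd h H⟩
  obtain ⟨hq, hqinj, hgood⟩ := H
  have hpos : ∀ j, j < n → 0 < r j := fun j hj => (hgood j hj).pos
  -- the center
  set P := Pc q r n with hP
  have hPn : P ∈ interior (disc (E := E)) := Gn_maps hgood (hq n)
  -- radius 1 : stay in the interior of the disc
  obtain ⟨ρ1', hρ1', hball⟩ := Metric.isOpen_iff.mp isOpen_interior P hPn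
  -- radius 2 : modulus of continuity of `Fn n`
  have hcont : ContinuousAt (Fn q r n) P := (Fn_cont hpos).continuousAt
  have hhalf : (0:ℝ) < (1/2 : ℝ)^n / 2 := by positivity
  obtain ⟨δ, hδ, hmod⟩ := Metric.continuousAt_iff.mp hcont ((1/2 : ℝ)^n / 2) hhalf
  -- radius 3 : separation from the previous balls
  have hsep : ∀ j, j < n → r j / 2 < ‖P - Pc q r j‖ := fun j hj =>
    Gn_escape hgood hj (fun hcon => (Nat.lt_irrefl j) (by rw [hqinj hcon] at hj; exact hj))
  obtain ⟨ρ3, hρ3, hρ3le⟩ := exists_pos_le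
    (fun j => (1/2 : ℝ)^n * (‖P - Pc q r j‖ - r j / 2))
    (fun j hj => mul_pos (by positivity) (by linarith [hsep j hj]))
  set ρ := min (min (ρ1'/2) (δ/2)) (min ((1/2 : ℝ)^n) ρ3) with hρdef
  have hρpos : 0 < ρ :=
    lt_min (lt_min (by linarith) (by linarith)) (lt_min (by positivity) hρ3)
  refine ⟨ρ, fun _ => ?_⟩
  have hagree : ∀ j, j < n → Function.update r n ρ j = r j :=
    fun j hj => Function.update_of_ne (by omega) _ _
  have hPeq : Pc q (Function.update r n ρ) n = P := (Pc_congr (fun j hj => (hagree j hj).symm)).symm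
  have hFeq : Fn q (Function.update r n ρ) n = Fn q r n :=
    Fn_congr (fun j hj => hagree j hj)
  have hPeq' : ∀ j, j < n → Pc q (Function.update r n ρ) j = Pc q r j :=
    fun j hj => Pc_congr (fun i hi => hagree i (hi.trans hj))
  have hval : Function.update r n ρ n = ρ := Function.update_self _ _ _
  refine ⟨?_, ?_, ?_, ?_, ?_, ?_⟩
  · rw [hval]; exact hρpos
  · rw [hval]; exact le_trans (min_le_right _ _) (min_le_left _ _)
  · rw [hval, hPeq]
    intro x hx
    apply hball
    rw [Metric.mem_ball]
    calc dist x P ≤ ρ := hx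
      _ ≤ ρ1'/2 := le_trans (min_le_left _ _) (min_le_left _ _)
      _ < ρ1' := by linarith
  · intro j hj
    rw [hPeq, hPeq' j hj, hagree j hj]
    exact hsep j hj
  · intro j hj
    rw [hPeq, hPeq' j hj, hagree j hj, hval]
    exact le_trans (le_trans (min_le_right _ _) (min_le_right _ _)) (hρ3le j hj)
  · intro x y hx hy
    rw [hval, hPeq] at hx hy
    rw [hFeq]
    have hd : ∀ z : E, z ∈ Metric.closedBall P ρ → dist (Fn q r n z) (Fn q r n P) < (1/2:ℝ)^n/2 := by
      intro z hz
      apply hmod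
      rw [Metric.mem_closedBall] at hz
      calc dist z P ≤ ρ := hz
        _ ≤ δ/2 := le_trans (min_le_left _ _) (min_le_right _ _)
        _ < δ := by linarith
    have h1 := hd x hx
    have h2 := hd y hy
    have h3 := dist_triangle (Fn q r n x) (Fn q r n P) (Fn q r n y)
    rw [dist_comm (Fn q r n P) (Fn q r n y)] at h3
    rw [← dist_eq_norm]
    linarith

variable (q)

/-- the sequence of radii, chosen recursively. -/
noncomputable def rSeq : ℕ → ℝ
  | n => Classical.choose (ex_step q (fun j => if _h : j < n then rSeq j else 1) n)
  termination_by n => n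
  decreasing_by all_goals exact _h

variable {q}

lemma rSeq_good (hq : ∀ k, q k ∈ interior (disc (E := E))) (hqinj : Function.Injective q) :
    ∀ n, Good q (rSeq q) n := by
  intro n
  induction n using Nat.strong_induction_on with
  | _ n ih =>
    set rp : ℕ → ℝ := fun j => if _h : j < n then rSeq q j else 1 with hrp
    have hspec := Classical.choose_spec (ex_step q rp n)
    set ρ := Classical.choose (ex_step q rp n) with hρ
    have hrn : rSeq q n = ρ := by rw [rSeq]
    have hgoodrp : ∀ j, j < n → Good q rp j := by
      intro j hj
      apply Good_congr (r := rSeq q) (fun i hi => ?_) (ih j hj)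
      rw [hrp]
      simp only [dif_pos (lt_of_le_of_lt hi hj)]
    have hgood := hspec ⟨hq, hqinj, hgoodrp⟩
    apply Good_congr (r := Function.update rp n ρ) (fun i hi => ?_) hgood
    rcases Nat.lt_or_ge i n with h | h
    · rw [Function.update_of_ne (by omega), hrp]
      simp only [dif_pos h]
    · have : i = n := le_antisymm hi h
      rw [this, Function.update_self, hrn]

/-! ### the limit maps -/

section Limits

variable [CompleteSpace E]

variable (q r)

/-- the blow-up map `π`. -/
noncomputable def Plim (x : E) : E := limUnder atTop (fun n => Fn q r n x)

/-- the inverse map `g`. -/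
noncomputable def Glim (y : E) : E := limUnder atTop (fun n => Gn q r n y)

variable {q r}

lemma geom_to_zero : Tendsto (fun n : ℕ => 2 * (1/2 : ℝ)^n) atTop (𝓝 0) := by
  have := tendsto_pow_atTop_nhds_zero_of_lt_one (r := (1/2 : ℝ)) (by norm_num) (by norm_num)
  simpa using this.const_mul 2

variable (hg : ∀ i, Good q r i)
include hg

lemma cauchyF (x : E) : CauchySeq (fun n => Fn q r n x) := by
  apply cauchySeq_of_dist_le_of_summable (fun n => (1/2 : ℝ)^n)
    (fun n => ?_) summable_geometric_two
  rw [dist_comm, dist_eq_norm]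
  exact Fn_cauchy (hg n) x

lemma cauchyG (y : E) : CauchySeq (fun n => Gn q r n y) := by
  apply cauchySeq_of_dist_le_of_summable (fun n => (1/2 : ℝ)^n)
    (fun n => ?_) summable_geometric_two
  rw [dist_comm, dist_eq_norm]
  exact Gn_cauchy (hg n) y

lemma tendsto_Plim (x : E) : Tendsto (fun n => Fn q r n x) atTop (𝓝 (Plim q r x)) :=
  (cauchyF hg x).tendsto_limUnder

lemma tendsto_Glim (y : E) : Tendsto (fun n => Gn q r n y) atTop (𝓝 (Glim q r y)) :=
  (cauchyG hg y).tendsto_limUnder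

lemma dist_Fn_Plim (x : E) (n : ℕ) : dist (Fn q r n x) (Plim q r x) ≤ 2 * (1/2 : ℝ)^n := by
  have h := dist_le_tsum_of_dist_le_of_tendsto (d := fun n => (1/2 : ℝ)^n)
    (fun n => by rw [dist_comm, dist_eq_norm]; exact Fn_cauchy (hg n) x)
    summable_geometric_two (tendsto_Plim hg x) n
  refine le_trans h (le_of_eq ?_)
  rw [show (fun m => (1/2 : ℝ)^(n + m)) = (fun m => (1/2 : ℝ)^n * (1/2 : ℝ)^m) from
    funext (fun m => pow_add _ _ _), tsum_mul_left, tsum_geometric_two]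
  ring

lemma dist_Gn_Glim (y : E) (n : ℕ) : dist (Gn q r n y) (Glim q r y) ≤ 2 * (1/2 : ℝ)^n := by
  have h := dist_le_tsum_of_dist_le_of_tendsto (d := fun n => (1/2 : ℝ)^n)
    (fun n => by rw [dist_comm, dist_eq_norm]; exact Gn_cauchy (hg n) y)
    summable_geometric_two (tendsto_Glim hg y) n
  refine le_trans h (le_of_eq ?_)
  rw [show (fun m => (1/2 : ℝ)^(n + m)) = (fun m => (1/2 : ℝ)^n * (1/2 : ℝ)^m) from
    funext (fun m => pow_add _ _ _), tsum_mul_left, tsum_geometric_two]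
  ring

lemma unifF : TendstoUniformly (fun n x => Fn q r n x) (Plim q r) atTop := by
  rw [Metric.tendstoUniformly_iff]
  intro ε hε
  filter_upwards [geom_to_zero.eventually_lt_const hε] with n hn x
  exact lt_of_le_of_lt (by rw [dist_comm]; exact dist_Fn_Plim hg x n) hn

lemma unifG : TendstoUniformly (fun n y => Gn q r n y) (Glim q r) atTop := by
  rw [Metric.tendstoUniformly_iff]
  intro ε hε
  filter_upwards [geom_to_zero.eventually_lt_const hε] with n hn y
  exact lt_of_le_of_lt (by rw [dist_comm]; exact dist_Gn_Glim hg y n) hn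

lemma Plim_continuous : Continuous (Plim q r) :=
  (unifF hg).continuous (Eventually.of_forall (fun n => Fn_cont (fun j _ => (hg j).pos))).frequently

lemma Glim_continuousAt (hqinj : Function.Injective q) {y : E} (hy : y ∉ Set.range q) :
    ContinuousAt (Glim q r) y := by
  apply continuousAt_of_locally_uniform_approx_of_continuousAt
  intro u hu
  obtain ⟨n, hn⟩ := ((unifG hg) u hu).exists
  exact ⟨Set.univ, Filter.univ_mem, Gn q r n,
    Gn_contAt (fun j _ => (hg j).pos) (fun j _ hcon => hy ⟨j, hcon.symm⟩),
    fun z _ => hn z⟩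

lemma Plim_Glim (y : E) : Plim q r (Glim q r y) = y := by
  have h1 : Tendsto (fun n => Plim q r (Gn q r n y)) atTop (𝓝 (Plim q r (Glim q r y))) :=
    ((Plim_continuous hg).continuousAt).tendsto.comp (tendsto_Glim hg y)
  have h2 : Tendsto (fun n => Plim q r (Gn q r n y)) atTop (𝓝 y) := by
    rw [tendsto_iff_dist_tendsto_zero]
    apply squeeze_zero (fun n => dist_nonneg) (fun n => ?_) geom_to_zero
    calc dist (Plim q r (Gn q r n y)) y
        = dist (Plim q r (Gn q r n y)) (Fn q r n (Gn q r n y)) := by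
          rw [Fn_Gn (fun j _ => (hg j).pos)]
      _ ≤ 2 * (1/2 : ℝ)^n := by rw [dist_comm]; exact dist_Fn_Plim hg _ n
  exact tendsto_nhds_unique h1 h2

lemma Plim_collapse {k : ℕ} {x : E} (hx : ‖x - Pc q r k‖ ≤ r k / 2) :
    Plim q r x = q k := by
  have h1 : Tendsto (fun n => Fn q r n x) atTop (𝓝 (q k)) := by
    apply tendsto_atTop_of_eventually_const (i₀ := k + 1)
    intro n hn
    exact Fn_collapse hg n (by omega) x hx
  exact tendsto_nhds_unique (tendsto_Plim hg x) h1

lemma Glim_stab (k : ℕ) : Glim q r (q k) = Pc q r k := by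
  have h1 : Tendsto (fun n => Gn q r n (q k)) atTop (𝓝 (Pc q r k)) := by
    apply tendsto_atTop_of_eventually_const (i₀ := k + 1)
    intro n hn
    exact Gn_stab hg n (by omega)
  exact tendsto_nhds_unique (tendsto_Glim hg (q k)) h1

/-- key estimate: points near `q k` are sent by `g` near the sphere of radius `r k / 2`. -/
lemma Glim_near (hqinj : Function.Injective q) (k : ℕ) {η : ℝ} (hη : 0 < η) :
    ∃ δ > 0, ∀ y : E, y ≠ q k → ‖y - q k‖ < δ →
      ‖Glim q r y - Pc q r k‖ ≤ r k / 2 + η := by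
  have hrk := (hg k).pos
  have hexp : (0:ℝ) < Real.exp 8 := Real.exp_pos _
  set c := min (r k) (2 * η / Real.exp 8) with hc
  have hcpos : 0 < c := lt_min hrk (by positivity)
  have hcont : ContinuousAt (Gn q r k) (q k) := by
    apply Gn_contAt (fun j _ => (hg j).pos)
    intro j hj hcon
    exact absurd (hqinj hcon) (by omega)
  obtain ⟨δ, hδ, hmod⟩ := Metric.continuousAt_iff.mp hcont c hcpos
  refine ⟨δ, hδ, fun y hy hyd => ?_⟩
  have ht : ‖Gn q r k y - Pc q r k‖ < c := by
    have h := @hmod y (by rwa [dist_eq_norm])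
    rw [dist_eq_norm] at h
    exact h
  set t := ‖Gn q r k y - Pc q r k‖ with htdef
  have htpos : 0 ≤ t := norm_nonneg _
  have hne : Gn q r k y ≠ Pc q r k := by
    intro hcon
    exact hy (Gn_inj (fun j _ => (hg j).pos) hcon)
  -- base estimate at stage k+1
  have hbase : ‖Gn q r (k+1) y - Pc q r k‖ ≤ r k / 2 + t / 2 := by
    rw [Gn_succ, su_dist hrk hne, mfun_of_le (le_trans ht.le (min_le_left _ _))]
    linarith
  have hdrift := Gn_drift hg (by positivity) hbase
  have hlim : ‖Glim q r y - Pc q r k‖ ≤ r k / 2 + t / 2 * Real.exp 8 := by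
    apply le_of_tendsto (f := fun n => ‖Gn q r n y - Pc q r k‖)
      (((tendsto_Glim hg y).sub tendsto_const_nhds).norm)
    filter_upwards [eventually_ge_atTop (k+1)] with n hn
    calc ‖Gn q r n y - Pc q r k‖
        ≤ r k / 2 + t / 2 * Real.exp (∑ i ∈ Finset.Ico (k+1) n, 4 * (1/2 : ℝ)^i) :=
          hdrift n hn
      _ ≤ r k / 2 + t / 2 * Real.exp 8 := by
          have hse := sum_exp_bound k n
          nlinarith [htpos]
  have : t / 2 * Real.exp 8 ≤ η := by
    have h2 : t ≤ 2 * η / Real.exp 8 := le_trans ht.le (min_le_right _ _)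
    rw [div_mul_eq_mul_div, div_le_iff₀ (by norm_num : (0:ℝ) < 2)]
    calc t * Real.exp 8 ≤ (2 * η / Real.exp 8) * Real.exp 8 :=
      mul_le_mul_of_nonneg_right h2 hexp.le
    _ = η * 2 := by field_simp
  linarith

/-- the main lemma: on the complement of all the inner balls, `g ∘ π = id` and
`π` avoids the points `q k`. -/
lemma Plim_inverse (hqinj : Function.Injective q) {x : E}
    (hx : ∀ j, r j / 2 < ‖x - Pc q r j‖) :
    Glim q r (Plim q r x) = x ∧ Plim q r x ∉ Set.range q := by
  have hpos : ∀ j (_ : j < (0:ℕ) + 0), True := fun _ _ => trivial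
  -- `Glim (Fn n x) → x`
  have hGF : ∀ n, Gn q r n (Fn q r n x) = x := fun n =>
    Gn_Fn (fun i _ => hg i) _ (fun j _ => hx j)
  have htend : Tendsto (fun n => Glim q r (Fn q r n x)) atTop (𝓝 x) := by
    rw [tendsto_iff_dist_tendsto_zero]
    apply squeeze_zero (fun n => dist_nonneg) (fun n => ?_) geom_to_zero
    calc dist (Glim q r (Fn q r n x)) x
        = dist (Gn q r n (Fn q r n x)) (Glim q r (Fn q r n x)) := by
          rw [hGF n, dist_comm]
      _ ≤ 2 * (1/2 : ℝ)^n := dist_Gn_Glim hg _ n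
  have hnotq : Plim q r x ∉ Set.range q := by
    rintro ⟨k, hk⟩
    -- `Fn n x → q k` with `Fn n x ≠ q k`
    have hFneq : ∀ n, k < n → Fn q r n x ≠ q k := by
      intro n hn hcon
      have h1 : x = Gn q r n (q k) := by rw [← hcon, hGF n]
      rw [Gn_stab hg n hn] at h1
      have := hx k
      rw [h1, sub_self, norm_zero] at this
      linarith [(hg k).pos]
    have hxk : ‖x - Pc q r k‖ ≤ r k / 2 := by
      apply le_of_forall_pos_le_add
      intro η hη
      obtain ⟨δ, hδ, hnear⟩ := Glim_near hg hqinj k hη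
      have hFtend : Tendsto (fun n => Fn q r n x) atTop (𝓝 (q k)) := by
        rw [hk]; exact tendsto_Plim hg x
      have hev : ∀ᶠ n in atTop, ‖Glim q r (Fn q r n x) - Pc q r k‖ ≤ r k / 2 + η := by
        have h1 : ∀ᶠ n in atTop, ‖Fn q r n x - q k‖ < δ := by
          have := (tendsto_iff_dist_tendsto_zero.mp hFtend).eventually_lt_const hδ
          filter_upwards [this] with n hn
          rwa [dist_eq_norm] at hn
        filter_upwards [h1, eventually_gt_atTop k] with n h1n h2n
        exact hnear _ (hFneq n h2n) h1n
      exact le_of_tendsto ((htend.sub tendsto_const_nhds).norm) hev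
    linarith [hx k, hxk]
  have hGlim : Glim q r (Plim q r x) = x := by
    have h1 : Tendsto (fun n => Glim q r (Fn q r n x)) atTop (𝓝 (Glim q r (Plim q r x))) :=
      (Glim_continuousAt hg hqinj hnotq).tendsto.comp (tendsto_Plim hg x)
    exact tendsto_nhds_unique h1 htend
  exact ⟨hGlim, hnotq⟩

omit hg in
lemma Gn_maps_disc {n : ℕ} (hgn : ∀ j, j < n → Good q r j) :
    ∀ y : E, y ∈ disc (E := E) → Gn q r n y ∈ disc (E := E) := by
  induction n with
  | zero => exact fun y hy => hy
  | succ n ih =>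
    intro y hy
    have hgn' := hgn n (Nat.lt_succ_self n)
    rw [Gn_succ]
    rcases su_cases (p := Pc q r n) hgn'.pos (Gn q r n y) with h | h
    · rw [h]; exact ih (fun j hj => hgn j (hj.trans (Nat.lt_succ_self n))) y hy
    · exact interior_subset
        (hgn'.sub (by rw [Metric.mem_closedBall, dist_eq_norm]; exact h.2))

lemma Plim_maps {x : E} (hx : x ∈ disc (E := E)) : Plim q r x ∈ disc (E := E) := by
  have : IsClosed (disc (E := E)) := Metric.isClosed_closedBall
  exact this.mem_of_tendsto (tendsto_Plim hg x)
    (Eventually.of_forall (fun n => Fn_maps (fun j _ => hg j) x hx))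

lemma Glim_maps {y : E} (hy : y ∈ disc (E := E)) : Glim q r y ∈ disc (E := E) := by
  have : IsClosed (disc (E := E)) := Metric.isClosed_closedBall
  exact this.mem_of_tendsto (tendsto_Glim hg y)
    (Eventually.of_forall (fun n => Gn_maps_disc (fun j _ => hg j) y hy))

end Limits

end Blowup

end

open Blowup

/-- The closed unit ball `𝔻` in `ℝ^d`. -/
def unitDisc (d : ℕ) : Set (EuclideanSpace ℝ (Fin d)) := Metric.closedBall 0 1

/-- **The blow-up lemma** (Lemma `BlowUpLemma`): given a countable set
`Q = {q_k : k ∈ ℕ}` of distinct points in the interior of the closed unit ball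
`𝔻 ⊆ ℝ^d` (`d ∈ {1,2}`), there exist a summable sequence of positive radii `ε_k`, centers
`p_k` with `closedBall (p_k, ε_k) ⊆ int 𝔻`, and a map `π : 𝔻 → 𝔻` which is a continuous
surjection, satisfies `π⁻¹({q_k}) = closedBall (p_k, ε_k)` for each `k`, and restricts to
a homeomorphism from `𝔻 ∖ ∪_k closedBall (p_k, ε_k)` onto `𝔻 ∖ Q`. -/
theorem blowup_lemma (d : ℕ) (hd : d = 1 ∨ d = 2)
    (q : ℕ → EuclideanSpace ℝ (Fin d)) (hqinj : Function.Injective q)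
    (hq : ∀ k, q k ∈ interior (unitDisc d)) :
    ∃ (ε : ℕ → ℝ) (p : ℕ → EuclideanSpace ℝ (Fin d))
      (π : EuclideanSpace ℝ (Fin d) → EuclideanSpace ℝ (Fin d)),
      (∀ k, 0 < ε k) ∧ Summable ε ∧
      (∀ k, Metric.closedBall (p k) (ε k) ⊆ interior (unitDisc d)) ∧
      -- (1) π is continuous and surjective (as a self-map of 𝔻)
      ContinuousOn π (unitDisc d) ∧ Set.MapsTo π (unitDisc d) (unitDisc d) ∧
      π '' unitDisc d = unitDisc d ∧
      -- (2) π⁻¹({q_k}) = closedBall (p_k, ε_k) for each k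
      (∀ k, unitDisc d ∩ π ⁻¹' {q k} = Metric.closedBall (p k) (ε k)) ∧
      -- (3) π restricted to 𝔻 ∖ ∪_k closedBall (p_k, ε_k) is a homeomorphism onto its
      -- image, which equals 𝔻 ∖ Q
      Set.InjOn π (unitDisc d \ ⋃ k, Metric.closedBall (p k) (ε k)) ∧
      π '' (unitDisc d \ ⋃ k, Metric.closedBall (p k) (ε k)) = unitDisc d \ Set.range q ∧
      ∃ g : EuclideanSpace ℝ (Fin d) → EuclideanSpace ℝ (Fin d),
        ContinuousOn g (unitDisc d \ Set.range q) ∧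
        Set.InvOn g π (unitDisc d \ ⋃ k, Metric.closedBall (p k) (ε k))
          (unitDisc d \ Set.range q) := by
  classical
  set r : ℕ → ℝ := rSeq q with hrdef
  have hdisc : unitDisc d = disc (E := EuclideanSpace ℝ (Fin d)) := rfl
  have hq' : ∀ k, q k ∈ interior (disc (E := EuclideanSpace ℝ (Fin d))) := by
    rw [← hdisc]; exact hq
  have hg : ∀ i, Good q r i := rSeq_good hq' hqinj
  set p : ℕ → EuclideanSpace ℝ (Fin d) := fun k => Pc q r k with hpdef
  set π : EuclideanSpace ℝ (Fin d) → EuclideanSpace ℝ (Fin d) := Plim q r with hπdef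
  set g : EuclideanSpace ℝ (Fin d) → EuclideanSpace ℝ (Fin d) := Glim q r with hgdef
  -- membership in the small balls, in norm form
  have hmem : ∀ (k : ℕ) (x : EuclideanSpace ℝ (Fin d)), x ∈ Metric.closedBall (p k) (r k / 2) ↔
      ‖x - Pc q r k‖ ≤ r k / 2 := by
    intro k x
    rw [Metric.mem_closedBall, dist_eq_norm]
  -- small balls are inside the interior of the disc
  have hball_sub : ∀ k, Metric.closedBall (p k) (r k / 2) ⊆
      interior (disc (E := EuclideanSpace ℝ (Fin d))) := by
    intro k
    exact subset_trans (Metric.closedBall_subset_closedBall (by linarith [(hg k).pos])) (hg k).sub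
  -- points outside all the small balls
  have houtside : ∀ x : EuclideanSpace ℝ (Fin d),
      (x ∉ ⋃ k, Metric.closedBall (p k) (r k / 2)) ↔
      (∀ j, r j / 2 < ‖x - Pc q r j‖) := by
    intro x
    simp only [Set.mem_iUnion, not_exists, hmem, not_le]
  -- fibers
  have hfiber : ∀ (k : ℕ) (x : EuclideanSpace ℝ (Fin d)),
      x ∈ Metric.closedBall (p k) (r k / 2) → π x = q k := by
    intro k x hx
    exact Plim_collapse hg ((hmem k x).mp hx)
  refine ⟨fun k => r k / 2, p, π, ?_, ?_, ?_, ?_, ?_, ?_, ?_, ?_, ?_, ?_⟩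
  · exact fun k => by linarith [(hg k).pos]
  · refine Summable.of_nonneg_of_le (fun k => by linarith [(hg k).pos])
      (fun k => ?_) summable_geometric_two
    have h1 := (hg k).small
    have h2 := (hg k).pos
    linarith
  · intro k; rw [hdisc]; exact hball_sub k
  · rw [hdisc]; exact (Plim_continuous hg).continuousOn
  · rw [hdisc]; exact fun x hx => Plim_maps hg hx
  · rw [hdisc]
    apply Set.Subset.antisymm
    · rintro y ⟨x, hx, rfl⟩
      exact Plim_maps hg hx
    · intro y hy
      exact ⟨g y, Glim_maps hg hy, Plim_Glim hg y⟩
  · intro k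
    rw [hdisc]
    ext x
    constructor
    · rintro ⟨hxD, hxq⟩
      rw [Set.mem_preimage, Set.mem_singleton_iff] at hxq
      by_cases hball : ∃ j, x ∈ Metric.closedBall (p j) (r j / 2)
      · obtain ⟨j, hj⟩ := hball
        have h1 : π x = q j := hfiber j x hj
        have h2 : j = k := hqinj (h1.symm.trans hxq)
        rwa [← h2]
      · push_neg at hball
        have hx' : ∀ j, r j / 2 < ‖x - Pc q r j‖ :=
          (houtside x).mp (by rw [Set.mem_iUnion]; push_neg; exact hball)
        exact absurd ⟨k, hxq.symm⟩ (Plim_inverse hg hqinj hx').2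
    · intro hx
      exact ⟨interior_subset (hball_sub k hx), by
        rw [Set.mem_preimage, Set.mem_singleton_iff]; exact hfiber k x hx⟩
  · rw [hdisc]
    rintro x ⟨hxD, hxU⟩ y ⟨hyD, hyU⟩ hxy
    have hx' := (houtside x).mp hxU
    have hy' := (houtside y).mp hyU
    have h1 := (Plim_inverse hg hqinj hx').1
    have h2 := (Plim_inverse hg hqinj hy').1
    rw [← h1, ← h2]
    exact congrArg _ hxy
  · rw [hdisc]
    apply Set.Subset.antisymm
    · rintro y ⟨x, ⟨hxD, hxU⟩, rfl⟩
      have hx' := (houtside x).mp hxU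
      exact ⟨Plim_maps hg hxD, (Plim_inverse hg hqinj hx').2⟩
    · rintro y ⟨hyD, hyQ⟩
      refine ⟨g y, ⟨Glim_maps hg hyD, ?_⟩, Plim_Glim hg y⟩
      rw [houtside]
      intro j
      by_contra hcon
      push_neg at hcon
      have h1 : Plim q r (Glim q r y) = q j := Plim_collapse hg hcon
      have h2 : Plim q r (Glim q r y) = y := Plim_Glim hg y
      exact hyQ ⟨j, by rw [← h1, h2]⟩
  · refine ⟨g, ?_, ?_, ?_⟩
    · rw [hdisc]
      intro y hy
      exact (Glim_continuousAt hg hqinj hy.2).continuousWithinAt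
    · rw [hdisc]
      rintro x ⟨hxD, hxU⟩
      exact (Plim_inverse hg hqinj ((houtside x).mp hxU)).1
    · rw [hdisc]
      rintro y ⟨hyD, hyQ⟩
      exact Plim_Glim hg y
end

section
/- Let d ≥ 1 and let g : [−1,1]^d → [−1,1]^d be a homeomorphism that restricts to the identity on the boundary ∂[−1,1]^d. Then there exists a homeomorphism f : [−1,1]^{d+1} → [−1,1]^{d+1} such that f restricts to the identity on ∂[−1,1]^{d+1}, f(x,0) = (g(x),0) for all x ∈ [−1,1]^d, and the nonwandering set of f satisfies NW(f) ⊆ ([−1,1]^d × {0}) ∪ ∂[−1,1]^{d+1}. -/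
open Filter Topology Set

/-- The cube `[-1,1]^d`. -/
def cube (d : ℕ) : Set (Fin d → ℝ) := {x | ∀ i, x i ∈ Set.Icc (-1 : ℝ) 1}

/-- The cube `[-1,1]^{d+1}`, viewed as `[-1,1]^d × [-1,1]`. -/
def cubeSucc (d : ℕ) : Set ((Fin d → ℝ) × ℝ) := cube d ×ˢ Set.Icc (-1 : ℝ) 1

/-- The nonwandering set of a self-map `F` of a subset `D`: points `x ∈ D` such that
every neighborhood `U` of `x` (relative to `D`) satisfies `F^n(U) ∩ U ≠ ∅` for some
`n ≥ 1`. -/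
def nonwanderingOn {Y : Type*} [TopologicalSpace Y] (F : Y → Y) (D : Set Y) : Set Y :=
  {x ∈ D | ∀ U : Set Y, IsOpen U → x ∈ U → ∃ n ≥ 1, ∃ y ∈ U ∩ D, F^[n] y ∈ U ∩ D}

namespace Susp

variable {d : ℕ}

lemma mem_cube {x : Fin d → ℝ} : x ∈ cube d ↔ ‖x‖ ≤ 1 := by
  rw [pi_norm_le_iff_of_nonneg zero_le_one]
  simp [cube, Real.norm_eq_abs, abs_le, Set.mem_Icc]

lemma cube_eq (d : ℕ) : cube d = Metric.closedBall 0 1 := by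
  ext x
  rw [Metric.mem_closedBall, dist_zero_right, mem_cube]

lemma isClosed_cube : IsClosed (cube d) := by
  rw [cube_eq]; exact Metric.isClosed_closedBall

lemma isClosed_cubeSucc : IsClosed (cubeSucc d) :=
  isClosed_cube.prod isClosed_Icc

lemma isCompact_cubeSucc : IsCompact (cubeSucc d) := by
  rw [cubeSucc, cube_eq]
  exact (isCompact_closedBall _ _).prod isCompact_Icc

lemma frontier_cube (hd : 1 ≤ d) : frontier (cube d) = {x | ‖x‖ = 1} := by
  haveI : Nonempty (Fin d) := ⟨⟨0, hd⟩⟩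
  rw [cube_eq, frontier_closedBall']
  ext x
  simp [mem_sphere_zero_iff_norm]

lemma frontier_cubeSucc (hd : 1 ≤ d) : frontier (cubeSucc d) =
    cube d ×ˢ ({-1, 1} : Set ℝ) ∪ {x | ‖x‖ = 1} ×ˢ Set.Icc (-1 : ℝ) 1 := by
  rw [cubeSucc, frontier_prod_eq, isClosed_cube.closure_eq, closure_Icc,
    frontier_Icc (by norm_num : (-1:ℝ) ≤ 1), frontier_cube hd]

/-! ### The Alexander-trick interpolation -/

variable (g : (Fin d → ℝ) → (Fin d → ℝ))

/-- Alexander interpolation: acts like a rescaled `g` on the ball of radius `s`,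
identity outside. -/
noncomputable def A (s : ℝ) (x : Fin d → ℝ) : Fin d → ℝ :=
  if ‖x‖ ≤ s then s • g (s⁻¹ • x) else x

variable {g}

lemma A_of_le {s : ℝ} {x : Fin d → ℝ} (h : ‖x‖ ≤ s) : A g s x = s • g (s⁻¹ • x) :=
  if_pos h

lemma A_of_gt {s : ℝ} {x : Fin d → ℝ} (h : ¬ (‖x‖ ≤ s)) : A g s x = x :=
  if_neg h

lemma inv_smul_mem_cube {s : ℝ} {x : Fin d → ℝ} (h0 : 0 < s) (hxs : ‖x‖ ≤ s) :
    s⁻¹ • x ∈ cube d := by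
  rw [mem_cube, norm_smul, norm_inv, Real.norm_eq_abs, abs_of_pos h0]
  rw [inv_mul_le_iff₀ h0, mul_one]
  exact hxs

lemma norm_A_le_of_le (hg : Set.MapsTo g (cube d) (cube d)) {s : ℝ} {x : Fin d → ℝ}
    (hs : 0 ≤ s) (hxs : ‖x‖ ≤ s) : ‖A g s x‖ ≤ s := by
  rw [A_of_le hxs]
  rcases hs.eq_or_lt with h | h
  · subst h
    simp
  · have := mem_cube.mp (hg (inv_smul_mem_cube h hxs))
    rw [norm_smul, Real.norm_eq_abs, abs_of_pos h]
    nlinarith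

lemma A_eq_of_ge (hgs : ∀ y : Fin d → ℝ, ‖y‖ = 1 → g y = y) {s : ℝ} {x : Fin d → ℝ}
    (hs : 0 ≤ s) (hsx : s ≤ ‖x‖) : A g s x = x := by
  unfold A
  split_ifs with h
  · have hxs : ‖x‖ = s := le_antisymm h hsx
    rcases hs.eq_or_lt with h0 | h0
    · have hx0 : x = 0 := by
        rw [← norm_eq_zero, hxs, ← h0]
      rw [hx0, ← h0]
      simp
  
    · have harg : ‖s⁻¹ • x‖ = 1 := by
        rw [norm_smul, norm_inv, Real.norm_eq_abs, abs_of_pos h0, hxs]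
        field_simp
      rw [hgs _ harg, smul_inv_smul₀ (ne_of_gt h0)]
  · rfl

lemma A_mapsTo (hg : Set.MapsTo g (cube d) (cube d)) {s : ℝ} (hs : s ∈ Set.Icc (0:ℝ) 1) :
    Set.MapsTo (A g s) (cube d) (cube d) := by
  intro x hx
  by_cases h : ‖x‖ ≤ s
  · rw [mem_cube]
    exact le_trans (norm_A_le_of_le hg hs.1 h) hs.2
  · rw [A_of_gt h]; exact hx

lemma norm_A_lt (hg : Set.MapsTo g (cube d) (cube d)) {s : ℝ} {x : Fin d → ℝ}
    (hs : 0 ≤ s) (hs1 : s < 1) (hx : ‖x‖ < 1) : ‖A g s x‖ < 1 := by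
  by_cases h : ‖x‖ ≤ s
  · exact lt_of_le_of_lt (norm_A_le_of_le hg hs h) hs1
  · rw [A_of_gt h]; exact hx

lemma A_injOn (hg : Set.BijOn g (cube d) (cube d)) {s : ℝ} (hs : s ∈ Set.Icc (0:ℝ) 1) :
    Set.InjOn (A g s) (cube d) := by
  intro x hx y hy hxy
  by_cases hx' : ‖x‖ ≤ s <;> by_cases hy' : ‖y‖ ≤ s
  · rcases hs.1.eq_or_lt with h0 | h0
    · have hx0 : x = 0 := by
        rw [← norm_eq_zero]
        exact le_antisymm (by rw [← h0] at hx'; exact hx') (norm_nonneg x)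
      have hy0 : y = 0 := by
        rw [← norm_eq_zero]
        exact le_antisymm (by rw [← h0] at hy'; exact hy') (norm_nonneg y)
      rw [hx0, hy0]
    · rw [A_of_le hx', A_of_le hy'] at hxy
      have h1 : g (s⁻¹ • x) = g (s⁻¹ • y) := smul_right_injective _ (ne_of_gt h0) hxy
      have h2 : s⁻¹ • x = s⁻¹ • y :=
        hg.injOn (inv_smul_mem_cube h0 hx') (inv_smul_mem_cube h0 hy') h1
      have h3 := congrArg (fun z => s • z) h2
      simpa [smul_inv_smul₀ (ne_of_gt h0)] using h3
  · exfalso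
    have h1 : ‖A g s x‖ ≤ s := norm_A_le_of_le hg.mapsTo hs.1 hx'
    rw [hxy, A_of_gt hy'] at h1
    exact hy' h1
  · exfalso
    have h1 : ‖A g s y‖ ≤ s := norm_A_le_of_le hg.mapsTo hs.1 hy'
    rw [← hxy, A_of_gt hx'] at h1
    exact hx' h1
  · rwa [A_of_gt hx', A_of_gt hy'] at hxy

lemma A_surjOn (hg : Set.BijOn g (cube d) (cube d)) {s : ℝ} (hs : s ∈ Set.Icc (0:ℝ) 1) :
    Set.SurjOn (A g s) (cube d) (cube d) := by
  intro z hz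
  by_cases hzs : ‖z‖ ≤ s
  · rcases hs.1.eq_or_lt with h0 | h0
    · have hz0 : z = 0 := by
        rw [← norm_eq_zero]
        exact le_antisymm (by rw [← h0] at hzs; exact hzs) (norm_nonneg z)
      refine ⟨0, ?_, ?_⟩
      · rw [mem_cube]; simp
      · rw [hz0, A_of_le (by rw [norm_zero, ← h0]), ← h0]
        simp
    · obtain ⟨w, hw, hgw⟩ := hg.surjOn (inv_smul_mem_cube h0 hzs)
      have hnorm : ‖s • w‖ ≤ s := by
        rw [norm_smul, Real.norm_eq_abs, abs_of_pos h0]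
        have := mem_cube.mp hw
        nlinarith
      refine ⟨s • w, ?_, ?_⟩
      · rw [mem_cube]
        exact le_trans hnorm hs.2
      · rw [A_of_le hnorm, inv_smul_smul₀ (ne_of_gt h0), hgw,
          smul_inv_smul₀ (ne_of_gt h0)]
  · exact ⟨z, hz, A_of_gt hzs⟩

/-! ### The vertical pushing map -/

/-- The damping coefficient, vanishing on the boundary of the cube. -/
noncomputable def del (y : Fin d → ℝ) : ℝ := (1 - ‖y‖) / 4

lemma del_nonneg {y : Fin d → ℝ} (hy : y ∈ cube d) : 0 ≤ del y := by
  have := mem_cube.mp hy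
  unfold del; linarith

lemma del_le (y : Fin d → ℝ) : del y ≤ 1 / 4 := by
  have := norm_nonneg y
  unfold del; linarith

/-- Vertical push: fixes `-1, 0, 1`, pushes other points away from `0`, with speed
controlled by `del y`. -/
noncomputable def hmap (y : Fin d → ℝ) (t : ℝ) : ℝ := t + del y * (t * (1 - |t|))

lemma hmap_strictMonoOn {y : Fin d → ℝ} (hy : y ∈ cube d) :
    StrictMonoOn (hmap y) (Set.Icc (-1 : ℝ) 1) := by
  intro s hs t ht hst
  have hδ0 := del_nonneg hy
  have hδ1 := del_le y
  obtain ⟨hs1, hs2⟩ := hs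
  obtain ⟨ht1, ht2⟩ := ht
  unfold hmap
  rcases abs_cases s with ⟨e1, f1⟩ | ⟨e1, f1⟩ <;> rcases abs_cases t with ⟨e2, f2⟩ | ⟨e2, f2⟩ <;>
    rw [e1, e2]
  · -- 0 ≤ s, 0 ≤ t
    nlinarith [mul_nonneg (mul_nonneg hδ0 (by linarith : (0:ℝ) ≤ 2 - s - t))
        (by linarith : (0:ℝ) ≤ t - s),
      mul_le_mul_of_nonneg_right hδ1 (by linarith : (0:ℝ) ≤ t - s)]
  · -- 0 ≤ s, t < 0 : impossible
    linarith
  · -- s < 0, 0 ≤ t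
    nlinarith [mul_nonneg hδ0 (mul_nonneg f2 (by linarith : (0:ℝ) ≤ 1 - t)),
      mul_nonneg hδ0 (mul_nonneg (by linarith : (0:ℝ) ≤ -s) (by linarith : (0:ℝ) ≤ 1 + s))]
  · -- s < 0, t < 0
    nlinarith [mul_nonneg (mul_nonneg hδ0 (by linarith : (0:ℝ) ≤ 2 + s + t))
        (by linarith : (0:ℝ) ≤ t - s),
      mul_le_mul_of_nonneg_right hδ1 (by linarith : (0:ℝ) ≤ t - s)]

lemma hmap_neg_one (y : Fin d → ℝ) : hmap y (-1) = -1 := by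
  simp [hmap]

lemma hmap_one (y : Fin d → ℝ) : hmap y 1 = 1 := by
  simp [hmap]

lemma hmap_zero (y : Fin d → ℝ) : hmap y 0 = 0 := by
  simp [hmap]

lemma hmap_abs_one (y : Fin d → ℝ) {t : ℝ} (ht : |t| = 1) : hmap y t = t := by
  simp [hmap, ht]

lemma hmap_mem_Icc {y : Fin d → ℝ} (hy : y ∈ cube d) {t : ℝ}
    (ht : t ∈ Set.Icc (-1 : ℝ) 1) : hmap y t ∈ Set.Icc (-1 : ℝ) 1 := by
  have hmono := (hmap_strictMonoOn hy).monotoneOn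
  constructor
  · have := hmono (Set.left_mem_Icc.mpr (by norm_num)) ht ht.1
    rwa [hmap_neg_one] at this
  · have := hmono ht (Set.right_mem_Icc.mpr (by norm_num)) ht.2
    rwa [hmap_one] at this

lemma continuous_hmap : Continuous (fun p : (Fin d → ℝ) × ℝ => hmap p.1 p.2) := by
  unfold hmap del
  fun_prop

lemma hmap_surjOn (y : Fin d → ℝ) :
    Set.SurjOn (hmap y) (Set.Icc (-1 : ℝ) 1) (Set.Icc (-1 : ℝ) 1) := by
  have hcont : Continuous (hmap y) := by
    exact continuous_hmap.comp (Continuous.prodMk_right y)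
  have := intermediate_value_Icc (by norm_num : (-1:ℝ) ≤ 1) hcont.continuousOn
  rw [hmap_neg_one, hmap_one] at this
  exact this

/-! ### The suspension map -/

/-- First stage: apply the Alexander interpolation at level `1 - |t|`. -/
noncomputable def Cmap (g : (Fin d → ℝ) → (Fin d → ℝ)) (p : (Fin d → ℝ) × ℝ) :
    (Fin d → ℝ) × ℝ := (A g (1 - |p.2|) p.1, p.2)

/-- Second stage: push vertically. -/
noncomputable def Bmap (p : (Fin d → ℝ) × ℝ) : (Fin d → ℝ) × ℝ := (p.1, hmap p.1 p.2)

/-- The suspension map. -/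
noncomputable def Fmap (g : (Fin d → ℝ) → (Fin d → ℝ)) : (Fin d → ℝ) × ℝ → (Fin d → ℝ) × ℝ :=
  Bmap ∘ Cmap g

lemma s_mem {t : ℝ} (ht : t ∈ Set.Icc (-1:ℝ) 1) : 1 - |t| ∈ Set.Icc (0:ℝ) 1 := by
  obtain ⟨h1, h2⟩ := ht
  constructor
  · rcases abs_cases t with ⟨e, f⟩ | ⟨e, f⟩ <;> rw [e] <;> linarith
  · have := abs_nonneg t
    linarith

/-- Gluing lemma: continuity on a union of two closed sets. -/
lemma continuousOn_union_closed {X Y : Type*} [TopologicalSpace X] [TopologicalSpace Y]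
    {f : X → Y} {s t : Set X} (hs : IsClosed s) (ht : IsClosed t)
    (hfs : ContinuousOn f s) (hft : ContinuousOn f t) : ContinuousOn f (s ∪ t) := by
  intro x hx
  apply ContinuousWithinAt.union
  · by_cases h : x ∈ s
    · exact hfs x h
    · exact continuousWithinAt_of_notMem_closure (by rwa [hs.closure_eq])
  · by_cases h : x ∈ t
    · exact hft x h
    · exact continuousWithinAt_of_notMem_closure (by rwa [ht.closure_eq])

lemma continuousOn_Cmap (hgc : ContinuousOn g (cube d))
    (hg : Set.MapsTo g (cube d) (cube d))
    (hgs : ∀ y : Fin d → ℝ, ‖y‖ = 1 → g y = y) :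
    ContinuousOn (Cmap g) (cubeSucc d) := by
  apply ContinuousOn.prodMk _ continuousOn_snd
  -- continuity of p ↦ A g (1 - |p.2|) p.1
  set D₁ : Set ((Fin d → ℝ) × ℝ) := cubeSucc d ∩ {p | ‖p.1‖ ≤ 1 - |p.2|} with hD₁
  set D₂ : Set ((Fin d → ℝ) × ℝ) := cubeSucc d ∩ {p | 1 - |p.2| ≤ ‖p.1‖} with hD₂
  have hcover : cubeSucc d ⊆ D₁ ∪ D₂ := by
    intro p hp
    rcases le_total ‖p.1‖ (1 - |p.2|) with h | h
    · exact Or.inl ⟨hp, h⟩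
    · exact Or.inr ⟨hp, h⟩
  have hD₁closed : IsClosed D₁ := by
    apply isClosed_cubeSucc.inter
    exact isClosed_le (by fun_prop) (by fun_prop)
  have hD₂closed : IsClosed D₂ := by
    apply isClosed_cubeSucc.inter
    exact isClosed_le (by fun_prop) (by fun_prop)
  have hcont1 : ContinuousOn (fun p : (Fin d → ℝ) × ℝ => A g (1 - |p.2|) p.1) D₁ := by
    have heq : Set.EqOn (fun p : (Fin d → ℝ) × ℝ => A g (1 - |p.2|) p.1)
        (fun p : (Fin d → ℝ) × ℝ => (1 - |p.2|) • g ((1 - |p.2|)⁻¹ • p.1)) D₁ := by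
      intro p hp
      exact A_of_le hp.2
    apply ContinuousOn.congr _ heq
    -- continuity of the scaled formula on D₁
    have hmaps : Set.MapsTo (fun p : (Fin d → ℝ) × ℝ => (1 - |p.2|)⁻¹ • p.1) D₁ (cube d) := by
      intro q hq
      have hs := s_mem hq.1.2
      rcases hs.1.eq_or_lt with h0 | h0
      · have hq2 : ‖q.1‖ ≤ 1 - |q.2| := hq.2
        rw [← h0] at hq2
        have hq0 : q.1 = 0 := norm_le_zero_iff.mp hq2
        show (1 - |q.2|)⁻¹ • q.1 ∈ cube d
        rw [hq0, smul_zero, mem_cube, norm_zero]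
        norm_num
      · exact inv_smul_mem_cube h0 hq.2
    intro p hp
    by_cases h0 : 1 - |p.2| = 0
    · -- squeeze argument at the degenerate level
      have hbound : ∀ q ∈ D₁,
          ‖(1 - |q.2|) • g ((1 - |q.2|)⁻¹ • q.1)‖ ≤ 1 - |q.2| := by
        intro q hq
        have hs := s_mem hq.1.2
        have harg := hmaps hq
        have := mem_cube.mp (hg harg)
        rw [norm_smul, Real.norm_eq_abs, abs_of_nonneg hs.1]
        nlinarith [hs.1]
      have hval : (1 - |p.2|) • g ((1 - |p.2|)⁻¹ • p.1) = 0 := by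
        rw [h0, zero_smul]
      show Tendsto (fun q : (Fin d → ℝ) × ℝ => (1 - |q.2|) • g ((1 - |q.2|)⁻¹ • q.1))
        (𝓝[D₁] p) (𝓝 ((1 - |p.2|) • g ((1 - |p.2|)⁻¹ • p.1)))
      rw [hval]
      apply squeeze_zero_norm' (a := fun q : (Fin d → ℝ) × ℝ => 1 - |q.2|)
      · exact eventually_mem_nhdsWithin.mono hbound
      · have hcont : Continuous (fun q : (Fin d → ℝ) × ℝ => 1 - |q.2|) := by fun_prop
        have := hcont.tendsto p
        rw [h0] at this
        exact this.mono_left nhdsWithin_le_nhds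
    · have hpos : 0 < 1 - |p.2| :=
        lt_of_le_of_ne (s_mem hp.1.2).1 (Ne.symm h0)
      have hinner : ContinuousWithinAt
          (fun q : (Fin d → ℝ) × ℝ => (1 - |q.2|)⁻¹ • q.1) D₁ p := by
        refine ContinuousWithinAt.smul (?_ : ContinuousWithinAt (fun q : (Fin d → ℝ) × ℝ => (1 - |q.2|)⁻¹) D₁ p) continuousWithinAt_fst
        apply ContinuousAt.continuousWithinAt
        exact ((continuous_const.sub (continuous_abs.comp continuous_snd)).continuousAt).inv₀
          (ne_of_gt hpos)
      have hgcwa : ContinuousWithinAt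
          (fun q : (Fin d → ℝ) × ℝ => g ((1 - |q.2|)⁻¹ • q.1)) D₁ p :=
        ContinuousWithinAt.comp (hgc _ (hmaps hp)) hinner hmaps
      exact ContinuousWithinAt.smul
        (((continuous_const.sub (continuous_abs.comp continuous_snd)).continuousAt).continuousWithinAt)
        hgcwa
  have hcont2 : ContinuousOn (fun p : (Fin d → ℝ) × ℝ => A g (1 - |p.2|) p.1) D₂ := by
    have heq : Set.EqOn (fun p : (Fin d → ℝ) × ℝ => A g (1 - |p.2|) p.1)
        (fun p : (Fin d → ℝ) × ℝ => p.1) D₂ := by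
      intro p hp
      exact A_eq_of_ge hgs (s_mem hp.1.2).1 hp.2
    exact ContinuousOn.congr continuousOn_fst heq
  exact (continuousOn_union_closed hD₁closed hD₂closed hcont1 hcont2).mono hcover

lemma bijOn_Cmap (hg : Set.BijOn g (cube d) (cube d)) :
    Set.BijOn (Cmap g) (cubeSucc d) (cubeSucc d) := by
  refine ⟨?_, ?_, ?_⟩
  · intro p hp
    exact ⟨A_mapsTo hg.mapsTo (s_mem hp.2) hp.1, hp.2⟩
  · intro p hp q hq heq
    obtain ⟨h1, h2⟩ := Prod.ext_iff.mp heq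
    simp only [Cmap] at h1 h2
    rw [← h2] at h1
    have := A_injOn hg (s_mem hp.2) hp.1 hq.1 h1
    exact Prod.ext this h2
  · intro z hz
    obtain ⟨x, hx, hAx⟩ := A_surjOn hg (s_mem hz.2) hz.1
    exact ⟨(x, z.2), ⟨hx, hz.2⟩, Prod.ext hAx rfl⟩

lemma bijOn_Bmap : Set.BijOn (Bmap (d := d)) (cubeSucc d) (cubeSucc d) := by
  refine ⟨?_, ?_, ?_⟩
  · intro p hp
    exact ⟨hp.1, hmap_mem_Icc hp.1 hp.2⟩
  · intro p hp q hq heq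
    obtain ⟨h1, h2⟩ := Prod.ext_iff.mp heq
    simp only [Bmap] at h1 h2
    rw [h1] at h2
    have := (hmap_strictMonoOn hq.1).injOn hp.2 hq.2 h2
    exact Prod.ext h1 this
  · intro z hz
    obtain ⟨t, ht, hht⟩ := hmap_surjOn z.1 hz.2
    exact ⟨(z.1, t), ⟨hz.1, ht⟩, Prod.ext rfl hht⟩

/-! ### Escaping lemma -/

lemma escape {X : Type*} [TopologicalSpace X] {f : X → X} {D : Set X}
    (hfD : Set.MapsTo f D D) (hfc : ContinuousOn f D) (φ : X → ℝ) (hφ : Continuous φ)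
    {p : X} (hpD : p ∈ D) (hc : 0 < φ (f p) - φ p)
    (hmono : ∀ q ∈ D, φ p - (φ (f p) - φ p) / 4 ≤ φ q → φ q ≤ φ (f q)) :
    p ∉ nonwanderingOn f D := by
  set c : ℝ := φ (f p) - φ p with hcdef
  intro hp
  -- find an open set on which the increment is at least c/2
  have hΦ : ContinuousOn (fun q => φ (f q) - φ q) D :=
    (hφ.comp_continuousOn hfc).sub hφ.continuousOn
  obtain ⟨W, hWopen, hpW, hW⟩ := continuousOn_iff.mp hΦ p hpD (Set.Ioi (c / 2))
    isOpen_Ioi (by simp only [Set.mem_Ioi]; linarith)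
  set U : Set X := W ∩ φ ⁻¹' (Set.Ioo (φ p - c / 4) (φ p + c / 4)) with hUdef
  have hUopen : IsOpen U := hWopen.inter (isOpen_Ioo.preimage hφ)
  have hpU : p ∈ U := ⟨hpW, by simp only [Set.mem_preimage, Set.mem_Ioo]; constructor <;> linarith⟩
  obtain ⟨n, hn, y, hy, hyn⟩ := hp.2 U hUopen hpU
  obtain ⟨⟨hyW, hyIoo⟩, hyD⟩ := hy
  simp only [Set.mem_preimage, Set.mem_Ioo] at hyIoo
  have hstep : c / 2 ≤ φ (f y) - φ y := by
    have := hW ⟨hyW, hyD⟩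
    simp only [Set.mem_preimage, Set.mem_Ioi] at this
    linarith
  have key : ∀ k, 1 ≤ k → f^[k] y ∈ D ∧ φ p + c / 4 ≤ φ (f^[k] y) := by
    intro k hk
    induction k with
    | zero => omega
    | succ m ih =>
      rcases Nat.lt_or_ge 1 (m + 1) with h1 | h1
      · have hm : 1 ≤ m := by omega
        obtain ⟨hD', hφ'⟩ := ih hm
        rw [Function.iterate_succ_apply']
        refine ⟨hfD hD', ?_⟩
        have := hmono _ hD' (by linarith)
        linarith
      · have hm0 : m = 0 := by omega
        subst hm0
        show f^[1] y ∈ D ∧ φ p + c / 4 ≤ φ (f^[1] y)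
        rw [Function.iterate_one]
        exact ⟨hfD hyD, by linarith [hyIoo.1]⟩
  obtain ⟨_, hbad⟩ := key n hn
  have hlt : φ (f^[n] y) < φ p + c / 4 := by
    have := hyn.1.2
    simp only [Set.mem_preimage, Set.mem_Ioo] at this
    exact this.2
  linarith

/-! ### Pointwise formulas for the suspension map -/

lemma Fmap_snd (g : (Fin d → ℝ) → (Fin d → ℝ)) (q : (Fin d → ℝ) × ℝ) :
    (Fmap g q).2 = q.2 + del (A g (1 - |q.2|) q.1) * (q.2 * (1 - |q.2|)) := rfl

lemma Fmap_frontier (hd : 1 ≤ d) (hg : Set.MapsTo g (cube d) (cube d))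
    (hgs : ∀ y : Fin d → ℝ, ‖y‖ = 1 → g y = y) :
    Set.EqOn (Fmap g) id (frontier (cubeSucc d)) := by
  intro p hp
  rw [frontier_cubeSucc hd] at hp
  have : Fmap g p = (A g (1 - |p.2|) p.1, hmap (A g (1 - |p.2|) p.1) p.2) := rfl
  rcases hp with ⟨hp1, hp2⟩ | ⟨hp1, hp2⟩
  · -- p.2 ∈ {-1, 1}
    have habs : |p.2| = 1 := by
      rcases hp2 with h | h <;> rw [h] <;> norm_num
    have hA : A g (1 - |p.2|) p.1 = p.1 := by
      rw [habs, sub_self]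
      exact A_eq_of_ge hgs le_rfl (norm_nonneg p.1)
    rw [this, hA, hmap_abs_one _ habs]
    rfl
  · -- ‖p.1‖ = 1
    have hp1' : ‖p.1‖ = 1 := hp1
    have hA : A g (1 - |p.2|) p.1 = p.1 :=
      A_eq_of_ge hgs (s_mem hp2).1 (by rw [hp1']; exact (s_mem hp2).2)
    have hh : hmap p.1 p.2 = p.2 := by
      unfold hmap del
      rw [hp1']
      ring
    rw [this, hA, hh]
    rfl

lemma Fmap_slice (hg : Set.MapsTo g (cube d) (cube d)) {x : Fin d → ℝ} (hx : x ∈ cube d) :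
    Fmap g (x, 0) = (g x, 0) := by
  have h1 : A g (1 - |(0:ℝ)|) x = g x := by
    rw [abs_zero, sub_zero, A_of_le (mem_cube.mp hx), inv_one, one_smul, one_smul]
  have : Fmap g (x, 0) = (A g (1 - |(0:ℝ)|) x, hmap (A g (1 - |(0:ℝ)|) x) 0) := rfl
  rw [this, h1, hmap_zero]

end Susp

open Susp in
/-- **Suspension of a boundary-fixing homeomorphism of the cube** (from the proof of
Corollary `higherDimCor`): if `g` is a homeomorphism of `[-1,1]^d` (`d ≥ 1`) restricting
to the identity on `∂[-1,1]^d`, then there is a homeomorphism `f` of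
`[-1,1]^{d+1} = [-1,1]^d × [-1,1]` restricting to the identity on `∂[-1,1]^{d+1}`, with
`f(x,0) = (g(x),0)` for all `x ∈ [-1,1]^d`, and whose nonwandering set is contained in
`([-1,1]^d × {0}) ∪ ∂[-1,1]^{d+1}`. -/
theorem suspension_homeomorphism (d : ℕ) (hd : 1 ≤ d)
    (g : (Fin d → ℝ) → (Fin d → ℝ))
    (hgc : ContinuousOn g (cube d)) (hgbij : Set.BijOn g (cube d) (cube d))
    (hgic : ∃ g' : (Fin d → ℝ) → (Fin d → ℝ), ContinuousOn g' (cube d) ∧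
      Set.InvOn g' g (cube d) (cube d))
    (hgbd : Set.EqOn g id (frontier (cube d))) :
    ∃ f : (Fin d → ℝ) × ℝ → (Fin d → ℝ) × ℝ,
      ContinuousOn f (cubeSucc d) ∧ Set.BijOn f (cubeSucc d) (cubeSucc d) ∧
      (∃ f' : (Fin d → ℝ) × ℝ → (Fin d → ℝ) × ℝ, ContinuousOn f' (cubeSucc d) ∧
        Set.InvOn f' f (cubeSucc d) (cubeSucc d)) ∧
      Set.EqOn f id (frontier (cubeSucc d)) ∧
      (∀ x ∈ cube d, f (x, 0) = (g x, 0)) ∧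
      nonwanderingOn f (cubeSucc d) ⊆ (cube d ×ˢ ({0} : Set ℝ)) ∪ frontier (cubeSucc d) := by
  classical
  have hgs : ∀ y : Fin d → ℝ, ‖y‖ = 1 → g y = y := by
    intro y hy
    have hmem : y ∈ frontier (cube d) := by rw [frontier_cube hd]; exact hy
    exact hgbd hmem
  have hfc : ContinuousOn (Fmap g) (cubeSucc d) := by
    have hB : Continuous (Bmap (d := d)) :=
      continuous_fst.prodMk continuous_hmap
    exact hB.comp_continuousOn (continuousOn_Cmap hgc hgbij.mapsTo hgs)
  have hbij : Set.BijOn (Fmap g) (cubeSucc d) (cubeSucc d) :=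
    bijOn_Bmap.comp (bijOn_Cmap hgbij)
  -- construction of the continuous inverse, via compactness
  haveI : CompactSpace (cubeSucc d) := isCompact_iff_compactSpace.mp isCompact_cubeSucc
  let E : cubeSucc d ≃ₜ cubeSucc d :=
    Continuous.homeoOfEquivCompactToT2 (f := Equiv.ofBijective _ hbij.bijective)
      (Continuous.subtype_mk (hfc.restrict) _)
  let f' : (Fin d → ℝ) × ℝ → (Fin d → ℝ) × ℝ :=
    fun y => if h : y ∈ cubeSucc d then (E.symm ⟨y, h⟩ : (Fin d → ℝ) × ℝ) else y
  have hf'c : ContinuousOn f' (cubeSucc d) := by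
    rw [continuousOn_iff_continuous_restrict]
    have hres : (cubeSucc d).domRestrict f' = fun y => (E.symm y : (Fin d → ℝ) × ℝ) := by
      funext y
      simp only [Set.domRestrict_apply, f', dif_pos y.2]
    rw [hres]
    exact continuous_subtype_val.comp E.symm.continuous
  have hf'inv : Set.InvOn f' (Fmap g) (cubeSucc d) (cubeSucc d) := by
    constructor
    · intro x hx
      have hfx : Fmap g x ∈ cubeSucc d := hbij.mapsTo hx
      have hEx : (⟨Fmap g x, hfx⟩ : cubeSucc d) = E ⟨x, hx⟩ := Subtype.ext rfl
      simp only [f', dif_pos hfx]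
      rw [hEx, Homeomorph.symm_apply_apply]
    · intro y hy
      simp only [f', dif_pos hy]
      have : Fmap g (E.symm ⟨y, hy⟩ : (Fin d → ℝ) × ℝ) = (E (E.symm ⟨y, hy⟩) : (Fin d → ℝ) × ℝ) :=
        rfl
      rw [this, Homeomorph.apply_symm_apply]
  refine ⟨Fmap g, hfc, hbij, ⟨f', hf'c, hf'inv⟩, Fmap_frontier hd hgbij.mapsTo hgs,
    fun x hx => Fmap_slice hgbij.mapsTo hx, ?_⟩
  -- the nonwandering set
  intro p hp
  have hpD : p ∈ cubeSucc d := hp.1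
  by_cases hfr : p ∈ frontier (cubeSucc d)
  · exact Or.inr hfr
  by_cases h0 : p.2 = 0
  · exact Or.inl ⟨hpD.1, h0⟩
  exfalso
  have hx1 : ‖p.1‖ < 1 := by
    rcases lt_or_eq_of_le (mem_cube.mp hpD.1) with h | h
    · exact h
    · exact absurd (by rw [frontier_cubeSucc hd]; exact Or.inr ⟨h, hpD.2⟩) hfr
  have ht1 : |p.2| < 1 := by
    have hle : |p.2| ≤ 1 := abs_le.mpr ⟨hpD.2.1, hpD.2.2⟩
    rcases lt_or_eq_of_le hle with h | h
    · exact h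
    · exfalso
      apply hfr
      rw [frontier_cubeSucc hd]
      rcases abs_eq (by norm_num : (0:ℝ) ≤ 1) |>.mp h with h' | h'
      · exact Or.inl ⟨hpD.1, Or.inr h'⟩
      · exact Or.inl ⟨hpD.1, Or.inl h'⟩
  have hsmem : 1 - |p.2| ∈ Set.Icc (0:ℝ) 1 := s_mem hpD.2
  have hslt : 1 - |p.2| < 1 := by
    have : 0 < |p.2| := abs_pos.mpr h0
    linarith
  set y : Fin d → ℝ := A g (1 - |p.2|) p.1 with hy
  have hyc : y ∈ cube d := A_mapsTo hgbij.mapsTo hsmem hpD.1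
  have hylt : ‖y‖ < 1 := norm_A_lt hgbij.mapsTo hsmem.1 hslt hx1
  have hdelpos : 0 < del y := by
    unfold del; linarith
  have hdelle : del y ≤ 1/4 := del_le y
  -- generic facts about second coordinates
  have habs_del : ∀ q ∈ cubeSucc d, 0 ≤ del (A g (1 - |q.2|) q.1) := fun q hq =>
    del_nonneg (A_mapsTo hgbij.mapsTo (s_mem hq.2) hq.1)
  have habs_le : ∀ q ∈ cubeSucc d, |q.2| ≤ 1 := fun q hq => abs_le.mpr ⟨hq.2.1, hq.2.2⟩
  rcases lt_or_gt_of_ne h0 with hneg | hpos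
  · -- p.2 < 0 : use φ = -snd
    have habsp : |p.2| = -p.2 := abs_of_neg hneg
    have hplt : -p.2 < 1 := by rw [habsp] at ht1; exact ht1
    have hcle : del y * (-p.2 * (1 + p.2)) ≤ -p.2 / 4 := by
      nlinarith [mul_le_mul_of_nonneg_right hdelle
        (mul_nonneg (neg_nonneg.mpr hneg.le) (by linarith : (0:ℝ) ≤ 1 + p.2)), sq_nonneg p.2]
    have hc : 0 < (fun q : (Fin d → ℝ) × ℝ => -q.2) (Fmap g p) -
        (fun q : (Fin d → ℝ) × ℝ => -q.2) p := by
      simp only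
      rw [Fmap_snd, ← hy, habsp]
      nlinarith [mul_pos hdelpos (mul_pos (neg_pos.mpr hneg) (by linarith : (0:ℝ) < 1 + p.2))]
    refine escape hbij.mapsTo hfc (fun q => -q.2) continuous_snd.neg hpD hc ?_ hp
    intro q hq hqge
    rw [Fmap_snd, ← hy, habsp] at hqge
    rw [Fmap_snd]
    have hq2 : q.2 ≤ 0 := by nlinarith [hqge, hcle]
    have : del (A g (1 - |q.2|) q.1) * (q.2 * (1 - |q.2|)) ≤ 0 := by
      apply mul_nonpos_of_nonneg_of_nonpos (habs_del q hq)
      apply mul_nonpos_of_nonpos_of_nonneg hq2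
      linarith [habs_le q hq]
    linarith
  · -- p.2 > 0 : use φ = snd
    have habsp : |p.2| = p.2 := abs_of_pos hpos
    have hplt : p.2 < 1 := by rw [habsp] at ht1; exact ht1
    have hcle : del y * (p.2 * (1 - p.2)) ≤ p.2 / 4 := by
      nlinarith [mul_le_mul_of_nonneg_right hdelle
        (mul_nonneg hpos.le (by linarith : (0:ℝ) ≤ 1 - p.2)), sq_nonneg p.2]
    have hc : 0 < (fun q : (Fin d → ℝ) × ℝ => q.2) (Fmap g p) -
        (fun q : (Fin d → ℝ) × ℝ => q.2) p := by
      simp only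
      rw [Fmap_snd, ← hy, habsp]
      nlinarith [mul_pos hdelpos (mul_pos hpos (by linarith : (0:ℝ) < 1 - p.2))]
    refine escape hbij.mapsTo hfc (fun q => q.2) continuous_snd hpD hc ?_ hp
    intro q hq hqge
    rw [Fmap_snd, ← hy, habsp] at hqge
    rw [Fmap_snd]
    have hq2 : 0 ≤ q.2 := by nlinarith [hqge, hcle]
    have : 0 ≤ del (A g (1 - |q.2|) q.1) * (q.2 * (1 - |q.2|)) := by
      apply mul_nonneg (habs_del q hq)
      apply mul_nonneg hq2
      linarith [habs_le q hq]
    linarith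
end
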